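/- arXiv:1307.5817 — 7 statements merged into one kernel-verified Lean document; each statement's English description precedes it below -/
import Mathlib

section
/- The space l_∞(r,s,t,p;B) = {x ∈ w : A(r,s,t;B)x ∈ l_∞(p)} is a complete linear metric space with paranorm h(x) = sup_n |(A(r,s,t;B)x)_n|^{p_n/M}, provided inf_k p_k > 0. -/
open Filter Finset Topology

/-- The `A(r,s,t;B)`-transform: `(A(r,s,t)·B(u,v) x)_n`. -/
noncomputable def GmB (r s t : ℕ → ℂ) (u v : ℂ) (x : ℕ → ℂ) (n : ℕ) : ℂ :=
  (r n)⁻¹ * ((∑ k ∈ Finset.range n, (s (n - k) * t k * u + s (n - k - 1) * t (k + 1) * v) * x k)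
    + s 0 * t n * u * x n)

/-- Recursive solution of a lower-triangular system. -/
noncomputable def triSolve (c : ℕ → ℕ → ℂ) (d : ℕ → ℂ) (y : ℕ → ℂ) : ℕ → ℂ
  | n => (y n - ∑ k ∈ (Finset.range n).attach, c n k.1 * triSolve c d y k.1) / d n
decreasing_by exact Finset.mem_range.mp k.2

lemma triSolve_eq (c : ℕ → ℕ → ℂ) (d : ℕ → ℂ) (y : ℕ → ℂ) (n : ℕ) :
    triSolve c d y n = (y n - ∑ k ∈ Finset.range n, c n k * triSolve c d y k) / d n := by
  rw [triSolve, ← Finset.sum_attach (Finset.range n) (fun k => c n k * triSolve c d y k)]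

lemma triSolve_spec (c : ℕ → ℕ → ℂ) (d : ℕ → ℂ) (y : ℕ → ℂ) (n : ℕ) (hd : d n ≠ 0) :
    (∑ k ∈ Finset.range n, c n k * triSolve c d y k) + d n * triSolve c d y n = y n := by
  rw [triSolve_eq]
  field_simp
  ring

lemma rpow_subadd {a b q : ℝ} (ha : 0 ≤ a) (hb : 0 ≤ b) (h0 : 0 ≤ q) (h1 : q ≤ 1) :
    (a + b) ^ q ≤ a ^ q + b ^ q := by
  lift a to NNReal using ha
  lift b to NNReal using hb
  exact_mod_cast NNReal.rpow_add_le_add_rpow a b h0 h1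

lemma GmB_add (r s t : ℕ → ℂ) (u v : ℂ) (x y : ℕ → ℂ) (n : ℕ) :
    GmB r s t u v (x + y) n = GmB r s t u v x n + GmB r s t u v y n := by
  simp only [GmB, Pi.add_apply, mul_add, Finset.sum_add_distrib]
  ring

lemma GmB_smul (r s t : ℕ → ℂ) (u v : ℂ) (c : ℂ) (x : ℕ → ℂ) (n : ℕ) :
    GmB r s t u v (c • x) n = c * GmB r s t u v x n := by
  simp only [GmB, Pi.smul_apply, smul_eq_mul]
  have h2 : ∑ k ∈ Finset.range n, (s (n - k) * t k * u + s (n - k - 1) * t (k + 1) * v) * (c * x k)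
      = c * ∑ k ∈ Finset.range n, (s (n - k) * t k * u + s (n - k - 1) * t (k + 1) * v) * x k := by
    rw [Finset.mul_sum]
    exact Finset.sum_congr rfl fun k _ => by ring
  rw [h2]
  ring

lemma GmB_zero (r s t : ℕ → ℂ) (u v : ℂ) (n : ℕ) : GmB r s t u v 0 n = 0 := by
  simp [GmB]

lemma GmB_sub (r s t : ℕ → ℂ) (u v : ℂ) (x y : ℕ → ℂ) (n : ℕ) :
    GmB r s t u v (x - y) n = GmB r s t u v x n - GmB r s t u v y n := by
  have hxy : x - y = x + (-1 : ℂ) • y := by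
    funext k
    simp only [Pi.sub_apply, Pi.add_apply, Pi.smul_apply, smul_eq_mul]
    ring
  rw [hxy, GmB_add, GmB_smul]
  ring

lemma GmB_eq (r s t : ℕ → ℂ) (u v : ℂ) (x : ℕ → ℂ) (n : ℕ) :
    GmB r s t u v x n = (∑ k ∈ Finset.range n,
      ((r n)⁻¹ * (s (n - k) * t k * u + s (n - k - 1) * t (k + 1) * v)) * x k)
      + ((r n)⁻¹ * (s 0 * t n * u)) * x n := by
  have h2 : ∑ k ∈ Finset.range n,
      (r n)⁻¹ * ((s (n - k) * t k * u + s (n - k - 1) * t (k + 1) * v) * x k)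
      = ∑ k ∈ Finset.range n,
      ((r n)⁻¹ * (s (n - k) * t k * u + s (n - k - 1) * t (k + 1) * v)) * x k :=
    Finset.sum_congr rfl fun k _ => by ring
  rw [GmB, mul_add, Finset.mul_sum, h2]
  ring

/-- `l_∞(r,s,t,p;B)` is a complete linear metric space paranormed by
`h(x) = sup_n |(A(r,s,t;B)x)_n|^{p_n/M}`, provided `inf_k p_k > 0`. -/
theorem stmt1 (r s t : ℕ → ℂ) (u v : ℂ) (p : ℕ → ℝ)
    (hr : ∀ n, r n ≠ 0) (ht : ∀ n, t n ≠ 0) (hs : s 0 ≠ 0) (hu : u ≠ 0) (hv : v ≠ 0)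
    (hp : ∀ k, 0 < p k) (hpb : BddAbove (Set.range p))
    (hinf : ∃ c > (0 : ℝ), ∀ k, c ≤ p k)
    (M : ℝ) (hM : M = max 1 (⨆ k, p k))
    (X : Set (ℕ → ℂ))
    (hX : X = {x | BddAbove (Set.range fun n => ‖GmB r s t u v x n‖ ^ p n)})
    (h : (ℕ → ℂ) → ℝ)
    (hh : h = fun x => ⨆ n, ‖GmB r s t u v x n‖ ^ (p n / M)) :
    -- X is a linear space
    (∀ x ∈ X, ∀ y ∈ X, x + y ∈ X) ∧
    (∀ (c : ℂ), ∀ x ∈ X, c • x ∈ X) ∧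
    -- h is a paranorm on X
    h 0 = 0 ∧
    (∀ x, h (-x) = h x) ∧
    (∀ x ∈ X, ∀ y ∈ X, h (x + y) ≤ h x + h y) ∧
    (∀ (α : ℕ → ℂ) (a : ℂ) (xs : ℕ → ℕ → ℂ) (x : ℕ → ℂ),
      (∀ m, xs m ∈ X) → x ∈ X →
      Tendsto α atTop (nhds a) →
      Tendsto (fun m => h (xs m - x)) atTop (nhds 0) →
      Tendsto (fun m => h (α m • xs m - a • x)) atTop (nhds 0)) ∧
    -- completeness with respect to the paranorm
    (∀ xs : ℕ → ℕ → ℂ, (∀ m, xs m ∈ X) →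
      (∀ ε > (0 : ℝ), ∃ N, ∀ m ≥ N, ∀ l ≥ N, h (xs m - xs l) < ε) →
      ∃ x ∈ X, Tendsto (fun m => h (xs m - x)) atTop (nhds 0)) := by
  obtain ⟨cm, hcm0, hcm⟩ := hinf
  have hM1 : (1 : ℝ) ≤ M := hM ▸ le_max_left _ _
  have hM0 : (0 : ℝ) < M := lt_of_lt_of_le one_pos hM1
  have hpM : ∀ n, p n ≤ M := fun n => le_trans (le_ciSup hpb n) (hM ▸ le_max_right 1 _)
  have he0 : ∀ n, 0 < p n / M := fun n => div_pos (hp n) hM0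
  have he1 : ∀ n, p n / M ≤ 1 := fun n => (div_le_one hM0).2 (hpM n)
  -- nonnegativity of the terms
  have tnn : ∀ (x : ℕ → ℂ) n, 0 ≤ ‖GmB r s t u v x n‖ ^ (p n / M) :=
    fun x n => Real.rpow_nonneg (norm_nonneg _) _
  have tnn' : ∀ (x : ℕ → ℂ) n, 0 ≤ ‖GmB r s t u v x n‖ ^ p n :=
    fun x n => Real.rpow_nonneg (norm_nonneg _) _
  have hnn : ∀ x : ℕ → ℂ, 0 ≤ h x := fun x => hh ▸ Real.iSup_nonneg (tnn x)
  -- range boundedness criterion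
  have hrange : ∀ f : ℕ → ℝ, BddAbove (Set.range f) ↔ ∃ C, ∀ n, f n ≤ C := by
    intro f
    constructor
    · rintro ⟨C, hC⟩
      exact ⟨C, fun n => hC (Set.mem_range_self n)⟩
    · rintro ⟨C, hC⟩
      exact ⟨C, by rintro y ⟨n, rfl⟩; exact hC n⟩
  -- the two scales of boundedness agree
  have hsplit : ∀ (x : ℕ → ℂ) n,
      ‖GmB r s t u v x n‖ ^ p n = (‖GmB r s t u v x n‖ ^ (p n / M)) ^ M := by
    intro x n
    rw [← Real.rpow_mul (norm_nonneg _), div_mul_cancel₀ _ hM0.ne']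
  have hsplit' : ∀ (x : ℕ → ℂ) n,
      ‖GmB r s t u v x n‖ ^ (p n / M) = (‖GmB r s t u v x n‖ ^ p n) ^ M⁻¹ := by
    intro x n
    rw [← Real.rpow_mul (norm_nonneg _), div_eq_mul_inv]
  have memiff : ∀ x : ℕ → ℂ,
      BddAbove (Set.range fun n => ‖GmB r s t u v x n‖ ^ p n) ↔
      BddAbove (Set.range fun n => ‖GmB r s t u v x n‖ ^ (p n / M)) := by
    intro x
    rw [hrange, hrange]
    constructor
    · rintro ⟨C, hC⟩
      refine ⟨C ^ M⁻¹, fun n => ?_⟩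
      rw [hsplit']
      exact Real.rpow_le_rpow (tnn' x n) (hC n) (by positivity)
    · rintro ⟨C, hC⟩
      refine ⟨C ^ M, fun n => ?_⟩
      rw [hsplit]
      exact Real.rpow_le_rpow (tnn x n) (hC n) hM0.le
  -- `‖c‖ ^ (p n / M) ≤ max ‖c‖ 1`
  have hclemax : ∀ (c : ℂ) (n : ℕ), ‖c‖ ^ (p n / M) ≤ max ‖c‖ 1 := by
    intro c n
    rcases le_total ‖c‖ 1 with hc | hc
    · exact le_trans (Real.rpow_le_one (norm_nonneg _) hc (he0 n).le) (le_max_right _ _)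
    · calc ‖c‖ ^ (p n / M) ≤ ‖c‖ ^ (1 : ℝ) := Real.rpow_le_rpow_of_exponent_le hc (he1 n)
        _ = ‖c‖ := Real.rpow_one _
        _ ≤ _ := le_max_left _ _
  -- closure under addition
  have key2 : ∀ a b q : ℝ, 0 ≤ a → 0 ≤ b → 0 < q → q ≤ M →
      (a + b) ^ q ≤ 2 ^ M * (a ^ q + b ^ q) := by
    intro a b q ha hb hq hqM
    have h1 : (a + b) ^ q ≤ (2 * max a b) ^ q := by
      apply Real.rpow_le_rpow (by positivity) _ hq.le
      rcases le_total a b with hab | hab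
      · calc a + b ≤ b + b := by linarith
          _ = 2 * b := by ring
          _ ≤ 2 * max a b := by rw [max_eq_right hab]
      · calc a + b ≤ a + a := by linarith
          _ = 2 * a := by ring
          _ ≤ 2 * max a b := by rw [max_eq_left hab]
    have h2 : (2 * max a b) ^ q = 2 ^ q * (max a b) ^ q :=
      Real.mul_rpow (by norm_num) (le_max_of_le_left ha)
    have h3 : (2 : ℝ) ^ q ≤ 2 ^ M := Real.rpow_le_rpow_of_exponent_le one_le_two hqM
    have h4 : (max a b) ^ q ≤ a ^ q + b ^ q := by
      rcases max_cases a b with ⟨hm, _⟩ | ⟨hm, _⟩ <;> rw [hm]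
      · exact le_add_of_nonneg_right (Real.rpow_nonneg hb q)
      · exact le_add_of_nonneg_left (Real.rpow_nonneg ha q)
    calc (a + b) ^ q ≤ 2 ^ q * (max a b) ^ q := h1.trans_eq h2
      _ ≤ 2 ^ M * (a ^ q + b ^ q) := by
          apply mul_le_mul h3 h4 (Real.rpow_nonneg (le_max_of_le_left ha) q)
            (Real.rpow_nonneg (by norm_num) M)
  have addX : ∀ x ∈ X, ∀ y ∈ X, x + y ∈ X := by
    intro x hx y hy
    rw [hX, Set.mem_setOf_eq, hrange] at hx hy ⊢
    obtain ⟨C1, hC1⟩ := hx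
    obtain ⟨C2, hC2⟩ := hy
    refine ⟨2 ^ M * (C1 + C2), fun n => ?_⟩
    calc ‖GmB r s t u v (x + y) n‖ ^ p n
        ≤ (‖GmB r s t u v x n‖ + ‖GmB r s t u v y n‖) ^ p n := by
          apply Real.rpow_le_rpow (norm_nonneg _) _ (hp n).le
          rw [GmB_add]
          exact norm_add_le _ _
      _ ≤ 2 ^ M * (‖GmB r s t u v x n‖ ^ p n + ‖GmB r s t u v y n‖ ^ p n) :=
          key2 _ _ _ (norm_nonneg _) (norm_nonneg _) (hp n) (hpM n)
      _ ≤ 2 ^ M * (C1 + C2) := by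
          apply mul_le_mul_of_nonneg_left (add_le_add (hC1 n) (hC2 n))
            (Real.rpow_nonneg (by norm_num) M)
  have smulX : ∀ (c : ℂ), ∀ x ∈ X, c • x ∈ X := by
    intro c x hx
    rw [hX, Set.mem_setOf_eq, hrange] at hx ⊢
    obtain ⟨C, hC⟩ := hx
    have hC0 : 0 ≤ C := le_trans (tnn' x 0) (hC 0)
    refine ⟨(max ‖c‖ 1) ^ M * C, fun n => ?_⟩
    have hmax1 : (1 : ℝ) ≤ max ‖c‖ 1 := le_max_right _ _
    calc ‖GmB r s t u v (c • x) n‖ ^ p n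
        = ‖c‖ ^ p n * ‖GmB r s t u v x n‖ ^ p n := by
          rw [GmB_smul, norm_mul, Real.mul_rpow (norm_nonneg _) (norm_nonneg _)]
      _ ≤ (max ‖c‖ 1) ^ M * C := by
          apply mul_le_mul _ (hC n) (tnn' x n) (Real.rpow_nonneg (by positivity) M)
          calc ‖c‖ ^ p n ≤ (max ‖c‖ 1) ^ p n :=
                Real.rpow_le_rpow (norm_nonneg _) (le_max_left _ _) (hp n).le
            _ ≤ (max ‖c‖ 1) ^ M := Real.rpow_le_rpow_of_exponent_le hmax1 (hpM n)
  have subX : ∀ x ∈ X, ∀ y ∈ X, x - y ∈ X := by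
    intro x hx y hy
    have : x - y = x + (-1 : ℂ) • y := by funext k; simp only [Pi.sub_apply, Pi.add_apply, Pi.smul_apply, smul_eq_mul]; ring
    rw [this]
    exact addX x hx _ (smulX (-1) y hy)
  -- bounds on sup
  have happ : ∀ z : ℕ → ℂ, h z = ⨆ n, ‖GmB r s t u v z n‖ ^ (p n / M) := fun z => by rw [hh]
  have hble : ∀ x ∈ X, ∀ n, ‖GmB r s t u v x n‖ ^ (p n / M) ≤ h x := by
    intro x hx n
    rw [hX, Set.mem_setOf_eq] at hx
    rw [happ]
    exact le_ciSup ((memiff x).1 hx) n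
  refine ⟨addX, smulX, ?_, ?_, ?_, ?_, ?_⟩
  · -- h 0 = 0
    have hz : (fun n => ‖GmB r s t u v 0 n‖ ^ (p n / M)) = fun _ => (0 : ℝ) :=
      funext fun n => by rw [GmB_zero, norm_zero, Real.zero_rpow (he0 n).ne']
    rw [happ, hz, ciSup_const]
  · -- h (-x) = h x
    intro x
    rw [happ, happ]
    apply congrArg
    funext n
    have : (-x) = (-1 : ℂ) • x := by funext k; simp
    rw [this, GmB_smul, norm_mul]
    simp
  · -- triangle inequality
    intro x hx y hy
    rw [happ]
    apply ciSup_le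
    intro n
    calc ‖GmB r s t u v (x + y) n‖ ^ (p n / M)
        ≤ (‖GmB r s t u v x n‖ + ‖GmB r s t u v y n‖) ^ (p n / M) := by
          apply Real.rpow_le_rpow (norm_nonneg _) _ (he0 n).le
          rw [GmB_add]
          exact norm_add_le _ _
      _ ≤ ‖GmB r s t u v x n‖ ^ (p n / M) + ‖GmB r s t u v y n‖ ^ (p n / M) :=
          rpow_subadd (norm_nonneg _) (norm_nonneg _) (he0 n).le (he1 n)
      _ ≤ h x + h y := add_le_add (hble x hx n) (hble y hy n)
  · -- continuity of scalar multiplication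
    intro α a xs x hxs hx hα hto
    have hsub : ∀ m, xs m - x ∈ X := fun m => subX _ (hxs m) _ hx
    -- bound on ‖α m‖
    obtain ⟨K, hK⟩ := (hα.norm).bddAbove_range
    have hKm : ∀ m, ‖α m‖ ≤ K := fun m => hK (Set.mem_range_self m)
    have hKmax : ∀ m n, ‖α m‖ ^ (p n / M) ≤ max K 1 := by
      intro m n
      refine le_trans (hclemax (α m) n) (max_le_max (hKm m) le_rfl)
    -- α m - a → 0
    have h0 : Tendsto (fun m => ‖α m - a‖) atTop (𝓝 0) := by
      have := (hα.sub_const a).norm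
      simpa using this
    have hev : ∀ᶠ m in atTop, ‖α m - a‖ ≤ 1 := by
      filter_upwards [h0.eventually (ge_mem_nhds one_pos)] with m hm
      exact hm
    -- the comparison function tends to 0
    have hg : Tendsto (fun m => max K 1 * h (xs m - x) + ‖α m - a‖ ^ (cm / M) * h x)
        atTop (𝓝 0) := by
      have h1 : Tendsto (fun m => max K 1 * h (xs m - x)) atTop (𝓝 (max K 1 * 0)) :=
        hto.const_mul _
      have h2 : Tendsto (fun m => ‖α m - a‖ ^ (cm / M)) atTop (𝓝 0) := by
        have hc : ContinuousAt (fun z : ℝ => z ^ (cm / M)) 0 :=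
          Real.continuousAt_rpow_const 0 (cm / M) (Or.inr (div_pos hcm0 hM0).le)
        have := hc.tendsto.comp h0
        rw [Real.zero_rpow (div_pos hcm0 hM0).ne'] at this
        exact this
      have h3 : Tendsto (fun m => ‖α m - a‖ ^ (cm / M) * h x) atTop (𝓝 (0 * h x)) :=
        h2.mul_const _
      have := h1.add h3
      simpa using this
    apply squeeze_zero' (Eventually.of_forall fun m => hnn _) _ hg
    filter_upwards [hev] with m hm
    rw [happ]
    apply ciSup_le
    intro n
    have hdecomp : α m • xs m - a • x = α m • (xs m - x) + (α m - a) • x := by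
      funext k
      simp only [Pi.add_apply, Pi.sub_apply, Pi.smul_apply, smul_eq_mul]
      ring
    have hGd : GmB r s t u v (α m • xs m - a • x) n
        = α m * GmB r s t u v (xs m - x) n + (α m - a) * GmB r s t u v x n := by
      rw [hdecomp, GmB_add, GmB_smul, GmB_smul]
    have hsmall : ‖α m - a‖ ^ (p n / M) ≤ ‖α m - a‖ ^ (cm / M) := by
      rcases eq_or_lt_of_le (norm_nonneg (α m - a)) with hz | hz
      · rw [← hz, Real.zero_rpow (he0 n).ne', Real.zero_rpow (div_pos hcm0 hM0).ne']
      · exact Real.rpow_le_rpow_of_exponent_ge hz hm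
          ((div_le_div_iff_of_pos_right hM0).2 (hcm n))
    calc ‖GmB r s t u v (α m • xs m - a • x) n‖ ^ (p n / M)
        ≤ (‖α m * GmB r s t u v (xs m - x) n‖ + ‖(α m - a) * GmB r s t u v x n‖) ^ (p n / M) := by
          apply Real.rpow_le_rpow (norm_nonneg _) _ (he0 n).le
          rw [hGd]
          exact norm_add_le _ _
      _ ≤ ‖α m * GmB r s t u v (xs m - x) n‖ ^ (p n / M)
          + ‖(α m - a) * GmB r s t u v x n‖ ^ (p n / M) :=
          rpow_subadd (norm_nonneg _) (norm_nonneg _) (he0 n).le (he1 n)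
      _ = ‖α m‖ ^ (p n / M) * ‖GmB r s t u v (xs m - x) n‖ ^ (p n / M)
          + ‖α m - a‖ ^ (p n / M) * ‖GmB r s t u v x n‖ ^ (p n / M) := by
          rw [norm_mul, norm_mul, Real.mul_rpow (norm_nonneg _) (norm_nonneg _),
            Real.mul_rpow (norm_nonneg _) (norm_nonneg _)]
      _ ≤ max K 1 * h (xs m - x) + ‖α m - a‖ ^ (cm / M) * h x := by
          apply add_le_add
          · exact mul_le_mul (hKmax m n) (hble _ (hsub m) n) (tnn _ n)
              (le_trans zero_le_one (le_max_right _ _))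
          · exact mul_le_mul hsmall (hble x hx n) (tnn _ n) (Real.rpow_nonneg (norm_nonneg _) _)
  · -- completeness
    intro xs hxs hc
    -- each coordinate sequence is Cauchy
    have hcauchy : ∀ n, CauchySeq fun m => GmB r s t u v (xs m) n := by
      intro n
      rw [Metric.cauchySeq_iff]
      intro δ hδ
      obtain ⟨N, hN⟩ := hc (δ ^ (p n / M)) (Real.rpow_pos_of_pos hδ _)
      refine ⟨N, fun m hm l hl => ?_⟩
      by_contra hcon
      push_neg at hcon
      rw [dist_eq_norm, ← GmB_sub] at hcon
      have h1 : δ ^ (p n / M) ≤ ‖GmB r s t u v (xs m - xs l) n‖ ^ (p n / M) :=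
        Real.rpow_le_rpow hδ.le hcon (he0 n).le
      have h2 := hble _ (subX _ (hxs m) _ (hxs l)) n
      have h3 := hN m hm l hl
      linarith
    have hlim : ∀ n, ∃ L, Tendsto (fun m => GmB r s t u v (xs m) n) atTop (𝓝 L) :=
      fun n => cauchySeq_tendsto_of_complete (hcauchy n)
    choose y hy using hlim
    -- construct the preimage x of y
    set x : ℕ → ℂ := triSolve
      (fun n k => (r n)⁻¹ * (s (n - k) * t k * u + s (n - k - 1) * t (k + 1) * v))
      (fun n => (r n)⁻¹ * (s 0 * t n * u)) y with hxdef
    have hGx : ∀ n, GmB r s t u v x n = y n := by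
      intro n
      rw [hxdef, GmB_eq]
      exact triSolve_spec
        (fun n k => (r n)⁻¹ * (s (n - k) * t k * u + s (n - k - 1) * t (k + 1) * v))
        (fun n => (r n)⁻¹ * (s 0 * t n * u)) y n
        (mul_ne_zero (inv_ne_zero (hr n)) (mul_ne_zero (mul_ne_zero hs (ht n)) hu))
    -- key claim
    have key : ∀ ε > (0 : ℝ), ∃ N, ∀ m ≥ N, ∀ n,
        ‖GmB r s t u v (xs m) n - GmB r s t u v x n‖ ^ (p n / M) ≤ ε := by
      intro ε hε
      obtain ⟨N, hN⟩ := hc ε hε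
      refine ⟨N, fun m hm n => ?_⟩
      have hcont : Tendsto (fun l => ‖GmB r s t u v (xs m) n - GmB r s t u v (xs l) n‖ ^ (p n / M))
          atTop (𝓝 (‖GmB r s t u v (xs m) n - GmB r s t u v x n‖ ^ (p n / M))) := by
        have hb : Tendsto (fun l => GmB r s t u v (xs m) n - GmB r s t u v (xs l) n)
            atTop (𝓝 (GmB r s t u v (xs m) n - GmB r s t u v x n)) := by
          rw [hGx n]
          exact tendsto_const_nhds.sub (hy n)
        have hcrp : ContinuousAt (fun z : ℝ => z ^ (p n / M))
            ‖GmB r s t u v (xs m) n - GmB r s t u v x n‖ :=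
          Real.continuousAt_rpow_const _ _ (Or.inr (he0 n).le)
        exact hcrp.tendsto.comp hb.norm
      apply le_of_tendsto hcont
      filter_upwards [eventually_ge_atTop N] with l hl
      rw [← GmB_sub]
      exact le_of_lt (lt_of_le_of_lt (hble _ (subX _ (hxs m) _ (hxs l)) n) (hN m hm l hl))
    -- x ∈ X
    have hxX : x ∈ X := by
      obtain ⟨N, hN⟩ := key 1 one_pos
      rw [hX, Set.mem_setOf_eq, memiff, hrange]
      refine ⟨h (xs N) + 1, fun n => ?_⟩
      have hb1 : ‖GmB r s t u v x n‖
          ≤ ‖GmB r s t u v (xs N) n‖ + ‖GmB r s t u v (xs N) n - GmB r s t u v x n‖ := by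
        have h5 := norm_sub_le (GmB r s t u v (xs N) n)
          (GmB r s t u v (xs N) n - GmB r s t u v x n)
        rwa [sub_sub_cancel] at h5
      calc ‖GmB r s t u v x n‖ ^ (p n / M)
          ≤ (‖GmB r s t u v (xs N) n‖
            + ‖GmB r s t u v (xs N) n - GmB r s t u v x n‖) ^ (p n / M) :=
            Real.rpow_le_rpow (norm_nonneg _) hb1 (he0 n).le
        _ ≤ ‖GmB r s t u v (xs N) n‖ ^ (p n / M)
            + ‖GmB r s t u v (xs N) n - GmB r s t u v x n‖ ^ (p n / M) :=
            rpow_subadd (norm_nonneg _) (norm_nonneg _) (he0 n).le (he1 n)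
        _ ≤ h (xs N) + 1 := add_le_add (hble _ (hxs N) n) (hN N le_rfl n)
    refine ⟨x, hxX, ?_⟩
    rw [Metric.tendsto_atTop]
    intro ε hε
    obtain ⟨N, hN⟩ := key (ε / 2) (half_pos hε)
    refine ⟨N, fun m hm => ?_⟩
    rw [Real.dist_eq, sub_zero, abs_of_nonneg (hnn _)]
    have hle2 : h (xs m - x) ≤ ε / 2 := by
      rw [happ]
      apply ciSup_le
      intro n
      rw [GmB_sub]
      exact hN m hm n
    linarith
end

section
/- The map T : l(r,s,t,p;B) → l(p) defined by Tx = A(r,s,t;B)x is a linear bijection which preserves the paranorms; hence l(r,s,t,p;B) is linearly isomorphic to l(p). -/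
open Filter Finset Topology

/-- Recursive inverse of the `A(r,s,t;B)` transform. -/
noncomputable def invGmB (r s t : ℕ → ℂ) (u v : ℂ) (y : ℕ → ℂ) (n : ℕ) : ℂ :=
  (s 0 * t n * u)⁻¹ * (r n * y n - ∑ k ∈ (Finset.range n).attach,
    (s (n - k.1) * t k.1 * u + s (n - k.1 - 1) * t (k.1 + 1) * v) * invGmB r s t u v y k.1)
  termination_by n
  decreasing_by exact Finset.mem_range.mp k.2

lemma invGmB_eq (r s t : ℕ → ℂ) (u v : ℂ) (y : ℕ → ℂ) (n : ℕ) :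
    invGmB r s t u v y n = (s 0 * t n * u)⁻¹ * (r n * y n - ∑ k ∈ Finset.range n,
      (s (n - k) * t k * u + s (n - k - 1) * t (k + 1) * v) * invGmB r s t u v y k) := by
  rw [invGmB, Finset.sum_attach (Finset.range n)
    (fun k => (s (n - k) * t k * u + s (n - k - 1) * t (k + 1) * v) * invGmB r s t u v y k)]

lemma GmB_invGmB (r s t : ℕ → ℂ) (u v : ℂ) (y : ℕ → ℂ)
    (hr : ∀ n, r n ≠ 0) (ht : ∀ n, t n ≠ 0) (hs : s 0 ≠ 0) (hu : u ≠ 0) (n : ℕ) :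
    GmB r s t u v (invGmB r s t u v y) n = y n := by
  have hd : s 0 * t n * u ≠ 0 := mul_ne_zero (mul_ne_zero hs (ht n)) hu
  rw [GmB, invGmB_eq]
  field_simp
  rw [show ∑ x ∈ range n, (u * s (n - x) * t x + v * s (n - x - 1) * t (x + 1)) * invGmB r s t u v y x = ∑ x ∈ range n, (s (n - x) * t x * u + s (n - x - 1) * t (x + 1) * v) * invGmB r s t u v y x from Finset.sum_congr rfl fun _ _ => by ring]
  rw [mul_div_cancel_left₀ _ (ht n), div_eq_iff (hr n)]
  ring

/-- The map `T : l(r,s,t,p;B) → l(p)`, `Tx = A(r,s,t;B)x`, is a paranorm-preserving linear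
bijection; hence `l(r,s,t,p;B) ≅ l(p)`. -/
theorem stmt3 (r s t : ℕ → ℂ) (u v : ℂ) (p : ℕ → ℝ)
    (hr : ∀ n, r n ≠ 0) (ht : ∀ n, t n ≠ 0) (hs : s 0 ≠ 0) (hu : u ≠ 0) (hv : v ≠ 0)
    (hp : ∀ k, 0 < p k) (hpb : BddAbove (Set.range p)) (M : ℝ) (hM : M = max 1 (⨆ k, p k))
    (X : Set (ℕ → ℂ)) (hX : X = {x | Summable fun n => ‖GmB r s t u v x n‖ ^ p n})
    (Y : Set (ℕ → ℂ)) (hY : Y = {y | Summable fun n => ‖y n‖ ^ p n})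
    (T : (ℕ → ℂ) → (ℕ → ℂ)) (hT : T = fun x => GmB r s t u v x)
    (h : (ℕ → ℂ) → ℝ)
    (hh : h = fun x => (∑' n, ‖GmB r s t u v x n‖ ^ p n) ^ (1 / M))
    (g : (ℕ → ℂ) → ℝ) (hg : g = fun y => (∑' n, ‖y n‖ ^ p n) ^ (1 / M)) :
    -- T maps X into Y
    (∀ x ∈ X, T x ∈ Y) ∧
    -- T is linear
    (∀ x y : ℕ → ℂ, T (x + y) = T x + T y) ∧
    (∀ (c : ℂ) (x : ℕ → ℂ), T (c • x) = c • T x) ∧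
    -- T is injective on X
    (∀ x₁ ∈ X, ∀ x₂ ∈ X, T x₁ = T x₂ → x₁ = x₂) ∧
    -- T is surjective onto Y
    (∀ y ∈ Y, ∃ x ∈ X, T x = y) ∧
    -- T preserves the paranorms
    (∀ x ∈ X, h x = g (T x)) := by
  subst hT hX hY hh hg
  refine ⟨?_, ?_, ?_, ?_, ?_, ?_⟩
  · intro x hx
    simpa using hx
  · intro x y
    funext n
    simp only [GmB, Pi.add_apply, mul_add]
    rw [Finset.sum_add_distrib]
    ring
  · intro c x
    funext n
    simp only [GmB, Pi.smul_apply, smul_eq_mul]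
    have hc : ∑ k ∈ Finset.range n,
        (s (n - k) * t k * u + s (n - k - 1) * t (k + 1) * v) * (c * x k)
        = c * ∑ k ∈ Finset.range n,
        (s (n - k) * t k * u + s (n - k - 1) * t (k + 1) * v) * x k := by
      rw [Finset.mul_sum]
      exact Finset.sum_congr rfl fun k _ => by ring
    rw [hc]
    ring
  · intro x₁ _ x₂ _ hTe
    funext n
    induction n using Nat.strong_induction_on with
    | _ n ih =>
      have he : GmB r s t u v x₁ n = GmB r s t u v x₂ n := congrFun hTe n
      simp only [GmB] at he
      have hsum : ∑ k ∈ Finset.range n,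
          (s (n - k) * t k * u + s (n - k - 1) * t (k + 1) * v) * x₁ k
          = ∑ k ∈ Finset.range n,
          (s (n - k) * t k * u + s (n - k - 1) * t (k + 1) * v) * x₂ k :=
        Finset.sum_congr rfl fun k hk => by rw [ih k (Finset.mem_range.mp hk)]
      have h1 := mul_left_cancel₀ (inv_ne_zero (hr n)) he
      rw [hsum] at h1
      have h2 := add_left_cancel h1
      exact mul_left_cancel₀ (mul_ne_zero (mul_ne_zero hs (ht n)) hu) h2
  · intro y hy
    refine ⟨invGmB r s t u v y, ?_, ?_⟩
    · simp only [Set.mem_setOf_eq]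
      have : ∀ n, GmB r s t u v (invGmB r s t u v y) n = y n :=
        GmB_invGmB r s t u v y hr ht hs hu
      simpa only [this, Set.mem_setOf_eq] using hy
    · funext n
      exact GmB_invGmB r s t u v y hr ht hs hu n
  · intro x _
    rfl
end

section
/- The inverse of the triangle A(r,s,t) of generalized means is the triangle B̃ with entries b̃_{nk} = (-1)^{n-k} (D^{(s)}_{n-k}/t_n) r_k for 0 ≤ k ≤ n and 0 for k > n, where D^{(s)}_0 = 1/s_0 and D^{(s)}_n = (1/s_0^{n+1}) times the determinant of the n×n Toeplitz-type matrix with first column (s_1, s_2, ..., s_n), first row (s_1, s_0, 0, ..., 0), and entries s_{i-j+1} in position (i,j). -/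
open Filter Finset Topology

noncomputable def Nent (s : ℕ → ℂ) (k i j : ℕ) : ℂ :=
  if j = 0 then s (i + k) else if j ≤ i + 1 then s (i + 1 - j) else 0

noncomputable def Nmat (s : ℕ → ℂ) (k n : ℕ) : Matrix (Fin n) (Fin n) ℂ :=
  Matrix.of fun i j => Nent s k (i : ℕ) (j : ℕ)

lemma Nmat_det_zero (s : ℕ → ℂ) (k : ℕ) : (Nmat s k 0).det = 1 := Matrix.det_fin_zero

lemma Nmat_det_one (s : ℕ → ℂ) (k : ℕ) : (Nmat s k 1).det = s k := by
  rw [Matrix.det_fin_one]; simp [Nmat, Nent]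

lemma Nent_succ (s : ℕ → ℂ) (k p q : ℕ) : Nent s k (p+1) (q+1) = Nent s 1 p q := by
  unfold Nent
  rw [if_neg (Nat.succ_ne_zero q)]
  by_cases h0 : q = 0
  · subst h0
    rw [if_pos rfl, if_pos (by omega), show p + 1 + 1 - (0 + 1) = p + 1 by omega]
  · rw [if_neg h0]
    by_cases h1 : q ≤ p + 1
    · rw [if_pos (by omega), if_pos h1, show p + 1 + 1 - (q + 1) = p + 1 - q by omega]
    · rw [if_neg (by omega), if_neg h1]

lemma Nent_col0 (s : ℕ → ℂ) (k p : ℕ) : Nent s k (p+1) 0 = Nent s (k+1) p 0 := by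
  unfold Nent
  rw [if_pos rfl, if_pos rfl, show p + 1 + k = p + (k+1) by omega]

lemma Nent_shift (s : ℕ → ℂ) (k p q : ℕ) : Nent s k (p+1) (q+2) = Nent s (k+1) p (q+1) := by
  unfold Nent
  rw [if_neg (by omega), if_neg (Nat.succ_ne_zero q)]
  by_cases h1 : q + 1 ≤ p + 1
  · rw [if_pos (by omega), if_pos h1, show p + 1 + 1 - (q + 2) = p + 1 - (q + 1) by omega]
  · rw [if_neg (by omega), if_neg h1]

lemma Nmat_rec (s : ℕ → ℂ) (k n : ℕ) :
    (Nmat s k (n+2)).det = s k * (Nmat s 1 (n+1)).det - s 0 * (Nmat s (k+1) (n+1)).det := by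
  have h1 : (Nmat s k (n+2)).submatrix Fin.succ ((0 : Fin (n+2)).succAbove) = Nmat s 1 (n+1) := by
    ext p q
    simp only [Matrix.submatrix_apply, Fin.succAbove_zero, Nmat, Matrix.of_apply, Fin.val_succ]
    exact Nent_succ s k p q
  have h2 : (Nmat s k (n+2)).submatrix Fin.succ ((1 : Fin (n+2)).succAbove) = Nmat s (k+1) (n+1) := by
    ext p q
    induction q using Fin.cases with
    | zero =>
        have h : ((1 : Fin (n+2)).succAbove 0) = 0 := rfl
        simp only [Matrix.submatrix_apply, h, Nmat, Matrix.of_apply, Fin.val_succ, Fin.val_zero]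
        exact Nent_col0 s k p
    | succ q =>
        have h : ((1 : Fin (n+2)).succAbove q.succ) = q.succ.succ := by
          rw [Fin.succAbove_of_le_castSucc]
          rw [Fin.le_def]
          simp
        simp only [Matrix.submatrix_apply, h, Nmat, Matrix.of_apply, Fin.val_succ]
        exact Nent_shift s k p q
  have e0 : (Nmat s k (n+2)) 0 0 = s k := by simp [Nmat, Nent]
  have e1 : (Nmat s k (n+2)) 0 1 = s 0 := by
    simp [Nmat, Nent, Fin.val_one]
  have e2 : ∀ i : Fin n, (Nmat s k (n+2)) 0 i.succ.succ = 0 := by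
    intro i
    simp only [Nmat, Matrix.of_apply, Fin.val_zero, Fin.val_succ, Nent]
    exact if_neg (by omega)
  rw [show ((n+2 : ℕ)) = (n+1)+1 from rfl, Matrix.det_succ_row_zero, Fin.sum_univ_succ,
    Fin.sum_univ_succ]
  have hs1 : (Fin.succ (0 : Fin (n+1))) = (1 : Fin (n+2)) := rfl
  rw [hs1]
  simp only [e0, e1, e2, mul_zero, zero_mul, Finset.sum_const_zero, add_zero, h1, h2,
    Fin.val_zero, Fin.val_one, pow_zero, pow_one, one_mul, neg_one_mul]
  ring

lemma Nmat_det_eq_sum (s : ℕ → ℂ) :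
    ∀ n k, (Nmat s k (n+1)).det
      = ∑ j ∈ Finset.range (n+1), (-(s 0))^j * s (k+j) * (Nmat s 1 (n - j)).det := by
  intro n
  induction n with
  | zero =>
      intro k
      simp [Nmat_det_one, Nmat_det_zero, Nmat, Nent]
  | succ n ih =>
      intro k
      rw [show n + 1 + 1 = n + 2 from rfl, Nmat_rec, ih (k+1)]
      conv_rhs => rw [Finset.sum_range_succ']
      have hterm : ∀ j ∈ Finset.range (n+1),
          (-(s 0))^(j+1) * s (k+(j+1)) * (Nmat s 1 (n + 1 - (j+1))).det
            = -(s 0 * ((-(s 0))^j * s (k+1+j) * (Nmat s 1 (n - j)).det)) := by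
        intro j hj
        rw [show n + 1 - (j+1) = n - j by omega, show k + (j+1) = k + 1 + j by omega]
        ring
      rw [Finset.sum_congr rfl hterm, sum_neg_distrib, ← Finset.mul_sum]
      simp only [pow_zero, one_mul, Nat.add_zero, Nat.sub_zero]
      ring

/-- `D^{(s)}_n`: `D_0 = 1/s_0`, and for `n ≥ 1`,
`D_n = s_0^{-(n+1)}` times the determinant of the `n×n` matrix whose `(i,j)` entry is
`s_{i-j+1}` (with `s_m = 0` for `m < 0`), i.e. first column `(s_1,…,s_n)`,
first row `(s_1, s_0, 0, …, 0)`. -/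
noncomputable def Dets (s : ℕ → ℂ) (n : ℕ) : ℂ :=
  if n = 0 then (s 0)⁻¹
  else ((s 0) ^ (n + 1))⁻¹ *
    (Matrix.of fun i j : Fin n =>
      if (j : ℕ) ≤ (i : ℕ) + 1 then s ((i : ℕ) + 1 - (j : ℕ)) else 0).det

/-- The matrix `A(r,s,t)` of generalized means: `(A(r,s,t))_{nk} = s_{n-k} t_k / r_n`
for `0 ≤ k ≤ n`, `0` otherwise. -/
noncomputable def Agm (r s t : ℕ → ℂ) (n k : ℕ) : ℂ :=
  if k ≤ n then s (n - k) * t k / r n else 0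

/-- The claimed inverse triangle `B̃`: `b̃_{nk} = (-1)^{n-k} (D^{(s)}_{n-k}/t_n) r_k`
for `0 ≤ k ≤ n`, `0` otherwise. -/
noncomputable def Btil (r s t : ℕ → ℂ) (n k : ℕ) : ℂ :=
  if k ≤ n then (-1 : ℂ) ^ (n - k) * (Dets s (n - k) / t n) * r k else 0

lemma Dets_eq (s : ℕ → ℂ) (n : ℕ) : Dets s n = ((s 0)^(n+1))⁻¹ * (Nmat s 1 n).det := by
  unfold Dets
  by_cases h : n = 0
  · subst h
    rw [if_pos rfl, Nmat_det_zero, pow_one, mul_one]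
  · rw [if_neg h]
    congr 1
    congr 1
    ext i j
    simp only [Matrix.of_apply, Nmat, Nent]
    by_cases hj : (j : ℕ) = 0
    · rw [hj, if_pos rfl, if_pos (by omega), Nat.sub_zero]
    · rw [if_neg hj]

lemma conv' (s : ℕ → ℂ) (m : ℕ) :
    ∑ i ∈ Finset.range (m+1), (-1:ℂ)^i * (s 0)^(m-i) * (Nmat s 1 i).det * s (m-i)
      = if m = 0 then s 0 else 0 := by
  cases m with
  | zero => simp [Nmat_det_zero]
  | succ n =>
      rw [if_neg (Nat.succ_ne_zero n), Finset.sum_range_succ]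
      have hlast : (-1:ℂ)^(n+1) * (s 0)^(n+1-(n+1)) * (Nmat s 1 (n+1)).det * s (n+1-(n+1))
          = (-1:ℂ)^(n+1) * (Nmat s 1 (n+1)).det * s 0 := by
        rw [Nat.sub_self]
        ring
      rw [hlast]
      rw [← Finset.sum_range_reflect]
      have hterm : ∀ j ∈ Finset.range (n+1),
          (-1:ℂ)^(n + 1 - 1 - j) * (s 0)^(n+1-(n + 1 - 1 - j)) * (Nmat s 1 (n + 1 - 1 - j)).det
              * s (n+1-(n + 1 - 1 - j))
            = (-1:ℂ)^n * s 0 * ((-(s 0))^j * s (1+j) * (Nmat s 1 (n - j)).det) := by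
        intro j hj
        simp only [Finset.mem_range] at hj
        rw [show n + 1 - 1 - j = n - j by omega, show n + 1 - (n - j) = j + 1 by omega,
          show (1 + j) = j + 1 by omega]
        rw [show (-1:ℂ)^(n-j) = (-1)^n * (-1)^j by
          have h1 : (-1:ℂ)^(n-j) * (-1:ℂ)^j = (-1:ℂ)^n := by
            rw [← pow_add, show n - j + j = n by omega]
          have h2 : ((-1:ℂ)^j) * ((-1:ℂ)^j) = 1 := by
            rw [← mul_pow]; norm_num
          calc (-1:ℂ)^(n-j) = (-1:ℂ)^(n-j) * (((-1:ℂ)^j) * ((-1:ℂ)^j)) := by rw [h2, mul_one]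
            _ = ((-1:ℂ)^(n-j) * (-1:ℂ)^j) * (-1:ℂ)^j := by ring
            _ = (-1)^n * (-1)^j := by rw [h1]]
        rw [neg_pow]
        ring
      rw [Finset.sum_congr rfl hterm, ← Finset.mul_sum, ← Nmat_det_eq_sum s n 1]
      ring

lemma conv (s : ℕ → ℂ) (hs : s 0 ≠ 0) (m : ℕ) :
    ∑ i ∈ Finset.range (m+1), (-1:ℂ)^i * Dets s i * s (m-i) = if m = 0 then 1 else 0 := by
  have hterm : ∀ i ∈ Finset.range (m+1),
      (-1:ℂ)^i * Dets s i * s (m-i)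
        = ((s 0)^(m+1))⁻¹ * ((-1:ℂ)^i * (s 0)^(m-i) * (Nmat s 1 i).det * s (m-i)) := by
    intro i hi
    simp only [Finset.mem_range] at hi
    rw [Dets_eq]
    have hsplit : (s 0)^(m+1) = (s 0)^(m-i) * (s 0)^(i+1) := by
      rw [← pow_add, show m - i + (i+1) = m + 1 by omega]
    have hpow : ((s 0)^(i+1))⁻¹ = ((s 0)^(m+1))⁻¹ * (s 0)^(m-i) := by
      rw [hsplit, mul_inv]
      field_simp
    rw [hpow]
    ring
  rw [Finset.sum_congr rfl hterm, ← Finset.mul_sum, conv']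
  by_cases h : m = 0
  · subst h
    rw [if_pos rfl, if_pos rfl, pow_one, inv_mul_cancel₀ hs]
  · rw [if_neg h, if_neg h, mul_zero]

lemma filter_le_range (k n : ℕ) :
    (Finset.range (n+1)).filter (fun j => k ≤ j) = Finset.Ico k (n+1) := by
  ext x
  simp only [Finset.mem_filter, Finset.mem_range, Finset.mem_Ico]
  omega

/-- The inverse of the triangle `A(r,s,t)` of generalized means is the triangle `B̃`. -/
theorem stmt4 (r s t : ℕ → ℂ)
    (hr : ∀ n, r n ≠ 0) (ht : ∀ n, t n ≠ 0) (hs : s 0 ≠ 0) :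
    (∀ n k : ℕ, ∑ j ∈ Finset.range (n + 1), Agm r s t n j * Btil r s t j k =
      if n = k then 1 else 0) ∧
    (∀ n k : ℕ, ∑ j ∈ Finset.range (n + 1), Btil r s t n j * Agm r s t j k =
      if n = k then 1 else 0) := by
  constructor
  · intro n k
    by_cases hkn : k ≤ n
    · have key : ∀ j ∈ Finset.range (n+1), Agm r s t n j * Btil r s t j k
          = if k ≤ j then (r k / r n) * ((-1:ℂ)^(j-k) * Dets s (j-k) * s (n-j)) else 0 := by
        intro j hj
        simp only [Finset.mem_range] at hj
        unfold Agm Btil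
        rw [if_pos (by omega : j ≤ n)]
        by_cases h : k ≤ j
        · rw [if_pos h, if_pos h]
          field_simp
          rw [div_eq_div_iff (mul_ne_zero (ht j) (hr n)) (hr n)]
          ring
        · rw [if_neg h, if_neg h, mul_zero]
      rw [Finset.sum_congr rfl key, ← Finset.sum_filter, filter_le_range,
        Finset.sum_Ico_eq_sum_range, show n + 1 - k = (n - k) + 1 by omega]
      have key2 : ∀ i ∈ Finset.range ((n-k)+1),
          (r k / r n) * ((-1:ℂ)^(k+i-k) * Dets s (k+i-k) * s (n-(k+i)))
            = (r k / r n) * ((-1:ℂ)^i * Dets s i * s ((n-k)-i)) := by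
        intro i hi
        rw [show k + i - k = i by omega, show n - (k+i) = n - k - i by omega]
      rw [Finset.sum_congr rfl key2, ← Finset.mul_sum, conv s hs]
      by_cases h : n = k
      · rw [if_pos (by omega), if_pos h, mul_one, h, div_self (hr k)]
      · rw [if_neg (by omega), if_neg h, mul_zero]
    · rw [if_neg (by omega), Finset.sum_eq_zero]
      intro j hj
      simp only [Finset.mem_range] at hj
      unfold Btil
      rw [if_neg (by omega), mul_zero]
  · intro n k
    by_cases hkn : k ≤ n
    · have key : ∀ j ∈ Finset.range (n+1), Btil r s t n j * Agm r s t j k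
          = if k ≤ j then (t k / t n) * ((-1:ℂ)^(n-j) * Dets s (n-j) * s (j-k)) else 0 := by
        intro j hj
        simp only [Finset.mem_range] at hj
        unfold Agm Btil
        rw [if_pos (by omega : j ≤ n)]
        by_cases h : k ≤ j
        · rw [if_pos h, if_pos h]
          field_simp
          rw [div_eq_div_iff (mul_ne_zero (ht n) (hr j)) (ht n)]
          ring
        · rw [if_neg h, if_neg h, mul_zero]
      rw [Finset.sum_congr rfl key, ← Finset.sum_filter, filter_le_range,
        Finset.sum_Ico_eq_sum_range, show n + 1 - k = (n - k) + 1 by omega]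
      have key2 : ∀ i ∈ Finset.range ((n-k)+1),
          (t k / t n) * ((-1:ℂ)^(n-(k+i)) * Dets s (n-(k+i)) * s (k+i-k))
            = (t k / t n) * ((-1:ℂ)^((n-k)-i) * Dets s ((n-k)-i) * s ((n-k)-((n-k)-i))) := by
        intro i hi
        simp only [Finset.mem_range] at hi
        rw [show k + i - k = i by omega, show n - (k+i) = n - k - i by omega,
          show n - k - (n - k - i) = i by omega]
      rw [Finset.sum_congr rfl key2, ← Finset.mul_sum]
      have hrefl := Finset.sum_range_reflect
        (fun i => (-1:ℂ)^i * Dets s i * s ((n-k) - i)) ((n-k)+1)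
      simp only [Nat.add_sub_cancel] at hrefl
      rw [hrefl, conv s hs]
      by_cases h : n = k
      · rw [if_pos (by omega), if_pos h, mul_one, h, div_self (ht k)]
      · rw [if_neg (by omega), if_neg h, mul_zero]
    · rw [if_neg (by omega), Finset.sum_eq_zero]
      intro j hj
      simp only [Finset.mem_range] at hj
      unfold Agm
      rw [if_neg (by omega), mul_zero]
end

section
/- The triangle A(r,s,t;B) = A(r,s,t)·B(u,v) has inverse given by (A(r,s,t;B)^{-1})_{nj} = Σ_{k=j}^n (-1)^{k-j} ((-v)^{n-k}/u^{n-k+1}) (D^{(s)}_{k-j}/t_k) r_j for 0 ≤ j ≤ n, and 0 for j > n. -/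
open Filter Finset Topology

/-- The entries of the triangle `A(r,s,t;B) = A(r,s,t)·B(u,v)`. -/
noncomputable def AgmB (r s t : ℕ → ℂ) (u v : ℂ) (n k : ℕ) : ℂ :=
  if k < n then (s (n - k) * t k * u + s (n - k - 1) * t (k + 1) * v) / r n
  else if k = n then s 0 * t n * u / r n
  else 0

/-- The claimed inverse of `A(r,s,t;B)`:
`(A(r,s,t;B)⁻¹)_{nj} = Σ_{k=j}^n (-1)^{k-j} ((-v)^{n-k}/u^{n-k+1}) (D^{(s)}_{k-j}/t_k) r_j`. -/
noncomputable def CinvB (r t : ℕ → ℂ) (u v : ℂ) (D : ℕ → ℂ) (n j : ℕ) : ℂ :=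
  if j ≤ n then
    ∑ k ∈ Finset.Icc j n,
      (-1 : ℂ) ^ (k - j) * ((-v) ^ (n - k) / u ^ (n - k + 1)) * (D (k - j) / t k) * r j
  else 0

section Aux

/-- Triangular product of two infinite lower-triangular matrices. -/
noncomputable def mulT (M N : ℕ → ℕ → ℂ) (n k : ℕ) : ℂ :=
  ∑ j ∈ Finset.range (n + 1), M n j * N j k

/-- Lower triangularity. -/
def tri (M : ℕ → ℕ → ℂ) : Prop := ∀ ⦃n k : ℕ⦄, n < k → M n k = 0

noncomputable def deltaM (n k : ℕ) : ℂ := if n = k then 1 else 0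

lemma mulT_congr {M M' N N' : ℕ → ℕ → ℂ} (hM : ∀ n k, M n k = M' n k)
    (hN : ∀ n k, N n k = N' n k) : ∀ n k, mulT M N n k = mulT M' N' n k := by
  intro n k
  exact Finset.sum_congr rfl fun j _ => by rw [hM, hN]

lemma mulT_assoc {M N P : ℕ → ℕ → ℂ} (hN : tri N) :
    ∀ n k, mulT (mulT M N) P n k = mulT M (mulT N P) n k := by
  intro n k
  unfold mulT
  simp only [Finset.sum_mul, Finset.mul_sum]
  rw [Finset.sum_comm]
  refine Finset.sum_congr rfl fun i hi => ?_
  simp only [Finset.mem_range] at hi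
  rw [Finset.sum_congr rfl (g := fun j => M n i * (N i j * P j k)) fun j _ => by ring]
  rw [← Finset.mul_sum, ← Finset.mul_sum]
  congr 1
  refine (Finset.sum_subset (Finset.range_subset_range.2 (by omega)) fun j hj hj' => ?_).symm
  simp only [Finset.mem_range] at hj hj'
  rw [hN (by omega), zero_mul]

lemma deltaM_mulT (M : ℕ → ℕ → ℂ) : ∀ n k, mulT deltaM M n k = M n k := by
  intro n k
  unfold mulT deltaM
  rw [Finset.sum_eq_single n (fun j _ hne => by rw [if_neg (Ne.symm hne), zero_mul])
    (fun h => absurd (Finset.self_mem_range_succ n) h)]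
  rw [if_pos rfl, one_mul]

lemma mulT_deltaM {M : ℕ → ℕ → ℂ} (hM : tri M) : ∀ n k, mulT M deltaM n k = M n k := by
  intro n k
  unfold mulT deltaM
  rw [Finset.sum_eq_single k (fun j _ hne => by rw [if_neg hne, mul_zero])
    (fun h => by
      simp only [Finset.mem_range, Nat.lt_succ_iff, not_le] at h
      rw [hM h, zero_mul])]
  rw [if_pos rfl, mul_one]

end Aux

section Matrices

variable (r s t : ℕ → ℂ) (u v : ℂ) (D : ℕ → ℂ)

noncomputable def Am (n k : ℕ) : ℂ := if k ≤ n then s (n - k) * t k / r n else 0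
noncomputable def Bm (n k : ℕ) : ℂ := if k = n then u else if k + 1 = n then v else 0
noncomputable def Aim (n k : ℕ) : ℂ :=
  if k ≤ n then (-1 : ℂ) ^ (n - k) * D (n - k) * r k / t n else 0
noncomputable def Bim (n k : ℕ) : ℂ := if k ≤ n then (-v) ^ (n - k) / u ^ (n - k + 1) else 0

lemma tri_Am : tri (Am r s t) := fun n k h => by simp [Am, Nat.not_le.2 h]
lemma tri_Bm : tri (Bm u v) := fun n k h => by
  simp only [Bm]; rw [if_neg (by omega), if_neg (by omega)]
lemma tri_Aim : tri (Aim r t D) := fun n k h => by simp [Aim, Nat.not_le.2 h]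
lemma tri_Bim : tri (Bim u v) := fun n k h => by simp [Bim, Nat.not_le.2 h]

end Matrices

section Computations

variable {r s t : ℕ → ℂ} {u v : ℂ} {D : ℕ → ℂ}
variable (hr : ∀ n, r n ≠ 0) (ht : ∀ n, t n ≠ 0) (hu : u ≠ 0)
variable (hD : ∀ n, ∑ k ∈ Finset.range (n + 1), (-1 : ℂ) ^ k * D k * s (n - k) =
      if n = 0 then 1 else 0)

/-- Sum against the band matrix on the right. -/
lemma mulT_Bm_eval (M : ℕ → ℕ → ℂ) (n k : ℕ) :
    mulT M (Bm u v) n k =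
      (if k ≤ n then M n k * u else 0) + (if k + 1 ≤ n then M n (k + 1) * v else 0) := by
  unfold mulT
  have hterm : ∀ j, M n j * Bm u v j k =
      (if j = k then M n k * u else 0) + (if j = k + 1 then M n (k + 1) * v else 0) := by
    intro j
    rcases eq_or_ne j k with rfl | h1
    · rw [if_pos rfl, if_neg (by omega), Bm, if_pos rfl, add_zero]
    · rcases eq_or_ne j (k + 1) with rfl | h2
      · rw [if_neg h1, if_pos rfl, Bm, if_neg (by omega), if_pos rfl, zero_add]
      · rw [if_neg h1, if_neg h2, Bm, if_neg (by omega), if_neg (by omega), mul_zero, add_zero]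
  rw [Finset.sum_congr rfl fun j _ => hterm j, Finset.sum_add_distrib,
    Finset.sum_ite_eq', Finset.sum_ite_eq']
  simp only [Finset.mem_range, Nat.lt_succ_iff]

include hr in
lemma AgmB_eq (n k : ℕ) : AgmB r s t u v n k = mulT (Am r s t) (Bm u v) n k := by
  rw [mulT_Bm_eval]
  have h1 : r n ≠ 0 := hr n
  rcases lt_trichotomy k n with h | rfl | h
  · rw [AgmB, if_pos h, if_pos (by omega), if_pos (by omega)]
    rw [Am, if_pos (by omega), Am, if_pos (by omega)]
    rw [show n - (k + 1) = n - k - 1 from by omega]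
    field_simp
  · rw [AgmB, if_neg (lt_irrefl _), if_pos rfl, if_pos le_rfl, if_neg (by omega)]
    rw [Am, if_pos le_rfl, Nat.sub_self, add_zero]
    ring
  · rw [AgmB, if_neg (by omega), if_neg (by omega), if_neg (by omega), if_neg (by omega)]
    simp

lemma CinvB_eq (n j : ℕ) : CinvB r t u v D n j = mulT (Bim u v) (Aim r t D) n j := by
  unfold mulT CinvB
  rw [Finset.range_eq_Ico]
  by_cases hjn : j ≤ n
  · rw [if_pos hjn]
    rw [show Finset.Icc j n = Finset.Ico j (n + 1) from (Finset.Ico_add_one_right_eq_Icc j n).symm]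
    rw [← Finset.sum_subset (Finset.Ico_subset_Ico_left (Nat.zero_le j))
      (fun x hx hx' => ?_)]
    · refine Finset.sum_congr rfl fun k hk => ?_
      simp only [Finset.mem_Ico] at hk
      rw [Bim, if_pos (by omega), Aim, if_pos hk.1]
      ring
    · simp only [Finset.mem_Ico, Nat.zero_le, true_and] at hx hx'
      rw [Aim, if_neg (by omega), mul_zero]
  · rw [if_neg hjn]
    refine (Finset.sum_eq_zero fun k hk => ?_).symm
    simp only [Finset.mem_Ico] at hk
    rw [Aim, if_neg (by omega), mul_zero]

include hr ht hD in
lemma Am_Aim (n k : ℕ) : mulT (Am r s t) (Aim r t D) n k = deltaM n k := by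
  unfold mulT deltaM
  rw [Finset.range_eq_Ico]
  by_cases hkn : k ≤ n
  · rw [← Finset.sum_subset (Finset.Ico_subset_Ico_left (Nat.zero_le k))
      (fun x hx hx' => ?_)]
    · rw [Finset.sum_congr rfl (g := fun j =>
        (-1 : ℂ) ^ (j - k) * D (j - k) * s (n - j) * (r k / r n)) fun j hj => ?_]
      · rw [← Finset.sum_mul, Finset.sum_Ico_eq_sum_range,
          show n + 1 - k = (n - k) + 1 from by omega]
        rw [Finset.sum_congr rfl (g := fun m => (-1 : ℂ) ^ m * D m * s (n - k - m))
          fun m hm => by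
            simp only [Finset.mem_range] at hm
            rw [show k + m - k = m from by omega, show n - (k + m) = n - k - m from by omega]]
        rw [hD (n - k)]
        by_cases h : n = k
        · subst h; simp [div_self (hr n)]
        · rw [if_neg (by omega), if_neg h, zero_mul]
      · simp only [Finset.mem_Ico] at hj
        rw [Am, if_pos (by omega), Aim, if_pos hj.1]
        have h1 : t j ≠ 0 := ht j
        have h2 : r n ≠ 0 := hr n
        field_simp
    · simp only [Finset.mem_Ico, Nat.zero_le, true_and] at hx hx'
      rw [Aim, if_neg (by omega), mul_zero]
  · rw [if_neg (by omega)]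
    refine Finset.sum_eq_zero fun j hj => ?_
    simp only [Finset.mem_Ico] at hj
    rw [Aim, if_neg (by omega), mul_zero]

include hr ht hD in
lemma Aim_Am (n k : ℕ) : mulT (Aim r t D) (Am r s t) n k = deltaM n k := by
  unfold mulT deltaM
  rw [Finset.range_eq_Ico]
  by_cases hkn : k ≤ n
  · rw [← Finset.sum_subset (Finset.Ico_subset_Ico_left (Nat.zero_le k))
      (fun x hx hx' => ?_)]
    · rw [Finset.sum_congr rfl (g := fun j =>
        (-1 : ℂ) ^ (n - j) * D (n - j) * s (j - k) * (t k / t n)) fun j hj => ?_]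
      · rw [← Finset.sum_mul, Finset.sum_Ico_eq_sum_range,
          show n + 1 - k = (n - k) + 1 from by omega]
        rw [← Finset.sum_range_reflect]
        rw [Finset.sum_congr rfl (g := fun m => (-1 : ℂ) ^ m * D m * s (n - k - m))
          fun m hm => by
            simp only [Finset.mem_range] at hm
            rw [show n - (k + (n - k + 1 - 1 - m)) = m from by omega,
              show k + (n - k + 1 - 1 - m) - k = n - k - m from by omega]]
        rw [hD (n - k)]
        by_cases h : n = k
        · subst h; simp [div_self (ht n)]
        · rw [if_neg (by omega), if_neg h, zero_mul]
      · simp only [Finset.mem_Ico] at hj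
        rw [Am, if_pos hj.1, Aim, if_pos (by omega)]
        have h1 : r j ≠ 0 := hr j
        have h2 : t n ≠ 0 := ht n
        field_simp
    · simp only [Finset.mem_Ico, Nat.zero_le, true_and] at hx hx'
      rw [Am, if_neg (by omega), mul_zero]
  · rw [if_neg (by omega)]
    refine Finset.sum_eq_zero fun j hj => ?_
    simp only [Finset.mem_Ico] at hj
    rw [Am, if_neg (by omega), mul_zero]

include hu in
lemma Bim_Bm (n k : ℕ) : mulT (Bim u v) (Bm u v) n k = deltaM n k := by
  rw [mulT_Bm_eval, deltaM]
  rcases lt_trichotomy k n with h | rfl | h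
  · obtain ⟨d, rfl⟩ : ∃ d, n = k + (d + 1) := ⟨n - k - 1, by omega⟩
    rw [if_pos (by omega), if_pos (by omega), if_neg (by omega)]
    rw [Bim, if_pos (by omega), Bim, if_pos (by omega)]
    rw [show k + (d + 1) - k = d + 1 from by omega,
      show k + (d + 1) - (k + 1) = d from by omega]
    field_simp
    ring
  · rw [if_pos le_rfl, if_neg (by omega), if_pos rfl, Bim, if_pos le_rfl, Nat.sub_self]
    simp [hu]
  · rw [if_neg (by omega), if_neg (by omega), if_neg (by omega)]
    simp

include hu in
lemma Bm_Bim (n k : ℕ) : mulT (Bm u v) (Bim u v) n k = deltaM n k := by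
  unfold mulT
  have hterm : ∀ j, Bm u v n j * Bim u v j k =
      (if j = n then u * Bim u v n k else 0) + (if j + 1 = n then v * Bim u v j k else 0) := by
    intro j
    rcases eq_or_ne j n with rfl | h1
    · rw [if_pos rfl, if_neg (by omega), Bm, if_pos rfl, add_zero]
    · rcases eq_or_ne (j + 1) n with h2 | h2
      · rw [if_neg h1, if_pos h2, Bm, if_neg (by omega), if_pos h2, zero_add]
      · rw [if_neg h1, if_neg h2, Bm, if_neg (by omega), if_neg h2, zero_mul, add_zero]
  rw [Finset.sum_congr rfl fun j _ => hterm j, Finset.sum_add_distrib, Finset.sum_ite_eq',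
    if_pos (Finset.self_mem_range_succ n)]
  rcases Nat.eq_zero_or_pos n with rfl | hn
  · rw [Finset.sum_eq_zero fun j hj => if_neg (by omega)]
    rcases Nat.eq_zero_or_pos k with rfl | hk
    · rw [Bim, if_pos le_rfl]; simp [deltaM, hu]
    · rw [Bim, if_neg (by omega), deltaM, if_neg (by omega)]; ring
  · obtain ⟨m, rfl⟩ : ∃ m, n = m + 1 := ⟨n - 1, by omega⟩
    have hterm2 : ∀ j, (if j + 1 = m + 1 then v * Bim u v j k else 0)
        = if j = m then v * Bim u v m k else 0 := by
      intro j
      rcases eq_or_ne j m with rfl | h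
      · simp
      · rw [if_neg (by omega), if_neg h]
    rw [Finset.sum_congr rfl fun j _ => hterm2 j, Finset.sum_ite_eq',
      if_pos (by simp only [Finset.mem_range]; omega)]
    rcases lt_trichotomy k (m + 1) with h | rfl | h
    · obtain ⟨d, rfl⟩ : ∃ d, m = k + d := ⟨m - k, by omega⟩
      rw [Bim, if_pos (by omega), Bim, if_pos (by omega), deltaM, if_neg (by omega)]
      rw [show k + d + 1 - k = d + 1 from by omega, show k + d - k = d from by omega]
      field_simp
      ring
    · rw [Bim, if_pos le_rfl, Bim, if_neg (by omega), deltaM, if_pos rfl, Nat.sub_self]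
      simp [hu]
    · rw [Bim, if_neg (by omega), Bim, if_neg (by omega), deltaM, if_neg (by omega)]
      ring

end Computations

/-- The triangle `A(r,s,t;B)` has the stated inverse, where the `D^{(s)}_k` are the inverse
coefficients of `(s_n)` (i.e. `Σ_{k=0}^n (-1)^k D_k s_{n-k} = δ_{n0}`). -/
theorem stmt5 (r s t : ℕ → ℂ) (u v : ℂ) (D : ℕ → ℂ)
    (hr : ∀ n, r n ≠ 0) (ht : ∀ n, t n ≠ 0) (hs : s 0 ≠ 0) (hu : u ≠ 0) (hv : v ≠ 0)
    (hD : ∀ n, ∑ k ∈ Finset.range (n + 1), (-1 : ℂ) ^ k * D k * s (n - k) =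
      if n = 0 then 1 else 0) :
    (∀ n k : ℕ, ∑ j ∈ Finset.range (n + 1), AgmB r s t u v n j * CinvB r t u v D j k =
      if n = k then 1 else 0) ∧
    (∀ n k : ℕ, ∑ j ∈ Finset.range (n + 1), CinvB r t u v D n j * AgmB r s t u v j k =
      if n = k then 1 else 0) := by
  have hA := AgmB_eq hr (s := s) (t := t) (u := u) (v := v)
  have hC := CinvB_eq (r := r) (t := t) (u := u) (v := v) (D := D)
  have h3 : ∀ n k, mulT (Bm u v) (mulT (Bim u v) (Aim r t D)) n k = Aim r t D n k := by
    intro n k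
    rw [← mulT_assoc (tri_Bim u v)]
    rw [mulT_congr (Bm_Bim hu) (fun _ _ => rfl) n k, deltaM_mulT]
  have h4 : ∀ n k, mulT (Aim r t D) (mulT (Am r s t) (Bm u v)) n k = Bm u v n k := by
    intro n k
    rw [← mulT_assoc (tri_Am r s t)]
    rw [mulT_congr (Aim_Am hr ht hD) (fun _ _ => rfl) n k, deltaM_mulT]
  constructor
  · intro n k
    show mulT (AgmB r s t u v) (CinvB r t u v D) n k = _
    rw [mulT_congr hA hC n k, mulT_assoc (tri_Bm u v),
      mulT_congr (fun _ _ => rfl) h3 n k, Am_Aim hr ht hD, deltaM]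
  · intro n k
    show mulT (CinvB r t u v D) (AgmB r s t u v) n k = _
    rw [mulT_congr hC hA n k, mulT_assoc (tri_Aim r t D),
      mulT_congr (fun _ _ => rfl) h4 n k, Bim_Bm hu, deltaM]
end

section
/- Let 0 < p_k ≤ 1 for all k. An infinite matrix A = (a_{nk}) maps l(p) into l_∞ if and only if there exists an integer L ≥ 1 such that sup_n sup_k |a_{nk} L^{-1}|^{p_k} < ∞. -/
open Filter Finset Topology

namespace GE8

lemma le_rpow_self {t q : ℝ} (ht : 0 ≤ t) (ht1 : t ≤ 1) (hq : 0 < q) (hq1 : q ≤ 1) :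
    t ≤ t ^ q := by
  rcases eq_or_lt_of_le ht with h|h
  · simp [← h, Real.zero_rpow hq.ne']
  · calc t = t ^ (1:ℝ) := (Real.rpow_one t).symm
      _ ≤ t ^ q := Real.rpow_le_rpow_of_exponent_ge h ht1 hq1

lemma rpow_le_self {t q : ℝ} (ht : 1 ≤ t) (hq1 : q ≤ 1) : t ^ q ≤ t := by
  calc t ^ q ≤ t ^ (1:ℝ) := Real.rpow_le_rpow_of_exponent_le ht hq1
    _ = t := Real.rpow_one t

lemma le_one_of_rpow {t q : ℝ} (ht : 0 ≤ t) (h : t ^ q ≤ 1) (hq : 0 < q) : t ≤ 1 := by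
  by_contra hlt
  push_neg at hlt
  have := (Real.one_lt_rpow_iff_of_pos (lt_trans one_pos hlt)).2 (Or.inl ⟨hlt, hq⟩)
  linarith

lemma summable_of_rpow (p : ℕ → ℝ) (hp : ∀ k, 0 < p k) (hp1 : ∀ k, p k ≤ 1)
    {f : ℕ → ℝ} (hf : ∀ k, 0 ≤ f k) (h : Summable fun k => f k ^ p k) : Summable f := by
  have h0 : ∀ᶠ k in atTop, f k ^ p k < 1 :=
    h.tendsto_atTop_zero.eventually (gt_mem_nhds one_pos)
  obtain ⟨K, hK⟩ := eventually_atTop.1 h0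
  refine (summable_nat_add_iff K).1 ?_
  refine Summable.of_nonneg_of_le (fun n => hf _) (fun n => ?_) ((summable_nat_add_iff K).2 h)
  have h1 : f (n + K) ^ p (n + K) ≤ 1 := (hK (n + K) (Nat.le_add_left _ _)).le
  exact le_rpow_self (hf _) (le_one_of_rpow (hf _) h1 (hp _)) (hp _) (hp1 _)

lemma sufficiency (p : ℕ → ℝ) (hp : ∀ k, 0 < p k) (hp1 : ∀ k, p k ≤ 1)
    (A : ℕ → ℕ → ℂ) (D : ℝ) (hD : 1 ≤ D) (hA : ∀ n k, ‖A n k‖ ^ p k ≤ D)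
    (x : ℕ → ℂ) (hx : Summable fun k => ‖x k‖ ^ p k) :
    ∃ Ax : ℕ → ℂ,
      (∀ n, Tendsto (fun m => ∑ k ∈ Finset.range m, A n k * x k) atTop (nhds (Ax n))) ∧
      BddAbove (Set.range fun n => ‖Ax n‖) := by
  have hD0 : (0:ℝ) < D := lt_of_lt_of_le one_pos hD
  have key : ∀ n k, ‖A n k * x k‖ ^ p k ≤ D * ‖x k‖ ^ p k := by
    intro n k
    rw [norm_mul, Real.mul_rpow (norm_nonneg _) (norm_nonneg _)]
    exact mul_le_mul_of_nonneg_right (hA n k) (Real.rpow_nonneg (norm_nonneg _) _)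
  have hsum_p : ∀ n, Summable fun k => ‖A n k * x k‖ ^ p k := fun n =>
    Summable.of_nonneg_of_le (fun k => Real.rpow_nonneg (norm_nonneg _) _) (key n)
      (hx.mul_left D)
  have habs : ∀ n, Summable fun k => ‖A n k * x k‖ := fun n =>
    summable_of_rpow p hp hp1 (fun k => norm_nonneg _) (hsum_p n)
  have hsum : ∀ n, Summable fun k => A n k * x k := fun n => (habs n).of_norm
  refine ⟨fun n => ∑' k, A n k * x k, fun n => (hsum n).hasSum.tendsto_sum_nat, ?_⟩
  -- uniform bound
  have hx0 : ∀ᶠ k in atTop, ‖x k‖ ^ p k < 1 / D :=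
    hx.tendsto_atTop_zero.eventually (gt_mem_nhds (by positivity))
  obtain ⟨K, hK⟩ := eventually_atTop.1 hx0
  set S : ℝ := ∑' k, ‖x k‖ ^ p k with hS
  have hterm : ∀ n k, k ≥ K → ‖A n k * x k‖ ≤ D * ‖x k‖ ^ p k := by
    intro n k hk
    have h1 : ‖A n k * x k‖ ^ p k ≤ 1 := by
      calc ‖A n k * x k‖ ^ p k ≤ D * ‖x k‖ ^ p k := key n k
        _ ≤ D * (1 / D) := mul_le_mul_of_nonneg_left (hK k hk).le hD0.le
        _ = 1 := by field_simp
    calc ‖A n k * x k‖ ≤ ‖A n k * x k‖ ^ p k :=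
          le_rpow_self (norm_nonneg _) (le_one_of_rpow (norm_nonneg _) h1 (hp k)) (hp k) (hp1 k)
      _ ≤ D * ‖x k‖ ^ p k := key n k
  have hhead : ∀ n k, ‖A n k * x k‖ ≤ D ^ (p k)⁻¹ * ‖x k‖ := by
    intro n k
    rw [norm_mul]
    refine mul_le_mul_of_nonneg_right ?_ (norm_nonneg _)
    calc ‖A n k‖ = (‖A n k‖ ^ p k) ^ (p k)⁻¹ :=
          (Real.rpow_rpow_inv (norm_nonneg _) (hp k).ne').symm
      _ ≤ D ^ (p k)⁻¹ :=
          Real.rpow_le_rpow (Real.rpow_nonneg (norm_nonneg _) _) (hA n k) (inv_nonneg.2 (hp k).le)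
  set B : ℝ := (∑ k ∈ Finset.range K, D ^ (p k)⁻¹ * ‖x k‖) + D * S with hB
  refine ⟨B, ?_⟩
  rintro y ⟨n, rfl⟩
  have hsplit : ∑' k, ‖A n k * x k‖ =
      (∑ k ∈ Finset.range K, ‖A n k * x k‖) + ∑' k, ‖A n (k + K) * x (k + K)‖ :=
    (Summable.sum_add_tsum_nat_add K (habs n)).symm
  calc ‖∑' k, A n k * x k‖ ≤ ∑' k, ‖A n k * x k‖ := norm_tsum_le_tsum_norm (habs n)
    _ = _ := hsplit
    _ ≤ B := by
        rw [hB]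
        refine add_le_add (Finset.sum_le_sum fun k _ => hhead n k) ?_
        have h1 : ∑' k, ‖A n (k + K) * x (k + K)‖ ≤ ∑' k, D * ‖x (k + K)‖ ^ p (k + K) := by
          refine Summable.tsum_le_tsum (fun k => hterm n (k + K) (Nat.le_add_left _ _)) 
            ((summable_nat_add_iff K).2 (habs n)) (((summable_nat_add_iff K).2 hx).mul_left D)
        refine h1.trans ?_
        rw [tsum_mul_left]
        refine mul_le_mul_of_nonneg_left ?_ hD0.le
        have := Summable.sum_add_tsum_nat_add K hx
        have h2 : 0 ≤ ∑ k ∈ Finset.range K, ‖x k‖ ^ p k :=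
          Finset.sum_nonneg fun k _ => Real.rpow_nonneg (norm_nonneg _) _
        rw [hS]; linarith [this]

section Row
variable (p : ℕ → ℝ) (a : ℕ → ℂ)
variable (hdiv : ∀ (C : ℝ) (K : ℕ), ∃ k, K < k ∧ C < ‖a k‖ ^ p k)

noncomputable def rseq : ℕ → ℕ
  | 0 => (hdiv ((2:ℝ) ^ (0:ℕ)) 0).choose
  | m + 1 => (hdiv ((2:ℝ) ^ (m+1)) (rseq m)).choose

lemma rseq_lt (m : ℕ) : rseq p a hdiv m < rseq p a hdiv (m+1) :=
  (hdiv ((2:ℝ) ^ (m+1)) (rseq p a hdiv m)).choose_spec.1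

lemma rseq_val (m : ℕ) :
    (2:ℝ) ^ m < ‖a (rseq p a hdiv m)‖ ^ p (rseq p a hdiv m) := by
  cases m with
  | zero => exact (hdiv ((2:ℝ) ^ (0:ℕ)) 0).choose_spec.2
  | succ m => exact (hdiv ((2:ℝ) ^ (m+1)) (rseq p a hdiv m)).choose_spec.2

lemma row_divergent (hp : ∀ k, 0 < p k)
    (hdiv : ∀ (C : ℝ) (K : ℕ), ∃ k, K < k ∧ C < ‖a k‖ ^ p k) :
    ∃ x : ℕ → ℂ, (Summable fun k => ‖x k‖ ^ p k) ∧
      ∀ l : ℂ, ¬ Tendsto (fun N => ∑ j ∈ Finset.range N, a j * x j) atTop (𝓝 l) := by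
  set g : ℕ → ℕ := rseq p a hdiv with hg
  have hmono : StrictMono g := strictMono_nat_of_lt_succ (rseq_lt p a hdiv)
  have hval : ∀ m, (2:ℝ) ^ m < ‖a (g m)‖ ^ p (g m) := rseq_val p a hdiv
  have hne : ∀ m, a (g m) ≠ 0 := by
    intro m hzero
    have := hval m
    rw [hzero] at this
    have h2 : (2:ℝ)^m < 0 := by simpa [Real.zero_rpow (hp (g m)).ne'] using this
    linarith [pow_pos (by norm_num : (0:ℝ) < 2) m]
  set x : ℕ → ℂ := (Set.range g).indicator (fun j => (a j)⁻¹) with hxdef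
  have hxr : ∀ m, x (g m) = (a (g m))⁻¹ := fun m =>
    Set.indicator_of_mem (Set.mem_range_self m) _
  have hx0 : ∀ j ∉ Set.range g, x j = 0 := fun j hj => Set.indicator_of_notMem hj _
  refine ⟨x, ?_, ?_⟩
  · refine (hmono.injective.summable_iff ?_).1 ?_
    · intro j hj
      rw [hx0 j hj]
      simp [Real.zero_rpow (hp j).ne']
    · refine Summable.of_nonneg_of_le (fun m => Real.rpow_nonneg (norm_nonneg _) _)
        (fun m => ?_) (summable_geometric_of_lt_one (by norm_num) (by norm_num :
          (2:ℝ)⁻¹ < 1))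
      show ‖x (g m)‖ ^ p (g m) ≤ (2:ℝ)⁻¹ ^ m
      rw [hxr m, norm_inv, Real.inv_rpow (norm_nonneg _), inv_pow]
      exact inv_anti₀ (by positivity) (hval m).le
  · intro l hl
    have h1 : Tendsto (fun N => (∑ j ∈ Finset.range (N+1), a j * x j)
        - ∑ j ∈ Finset.range N, a j * x j) atTop (𝓝 (l - l)) :=
      (hl.comp (tendsto_add_atTop_nat 1)).sub hl
    rw [sub_self] at h1
    have h1' : Tendsto (fun N => a N * x N) atTop (𝓝 0) :=
      h1.congr fun N => Finset.sum_range_succ_sub_sum _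
    have h2 : Tendsto (fun m => a (g m) * x (g m)) atTop (𝓝 0) :=
      h1'.comp hmono.tendsto_atTop
    have h3 : (fun m => a (g m) * x (g m)) = fun _ => (1:ℂ) := by
      funext m; rw [hxr m, mul_inv_cancel₀ (hne m)]
    rw [h3] at h2
    exact one_ne_zero (tendsto_nhds_unique tendsto_const_nhds h2)

end Row
noncomputable def stp (A : ℕ → ℕ → ℂ) (p : ℕ → ℝ)
    (key : ∀ (C : ℝ) (K : ℕ), ∃ nk : ℕ × ℕ, K < nk.2 ∧ C < ‖A nk.1 nk.2‖ ^ p nk.2)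
    (s : ℕ × ℝ × ℝ) (m : ℕ) : ℕ × ℕ :=
  (key (max ((m : ℝ) + s.2.1) 1 * 2 ^ m * s.2.2) s.1).choose

noncomputable def st (A : ℕ → ℕ → ℂ) (p : ℕ → ℝ) (Mc Er : ℕ → ℝ)
    (key : ∀ (C : ℝ) (K : ℕ), ∃ nk : ℕ × ℕ, K < nk.2 ∧ C < ‖A nk.1 nk.2‖ ^ p nk.2) :
    ℕ → ℕ × ℝ × ℝ
  | 0 => (0, 0, 1)
  | m + 1 =>
      let s := st A p Mc Er key m
      let t := stp A p key s m
      (t.2, s.2.1 + Mc t.2 * (((m : ℝ) + s.2.1) / ‖A t.1 t.2‖), max s.2.2 (Er t.1))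

lemma necessity_main (p : ℕ → ℝ) (hp : ∀ k, 0 < p k) (hp1 : ∀ k, p k ≤ 1)
    (A : ℕ → ℕ → ℂ) (Mc Er : ℕ → ℝ)
    (hMc1 : ∀ k, 1 ≤ Mc k) (hMcA : ∀ n k, ‖A n k‖ ≤ Mc k)
    (hErA : ∀ n k, ‖A n k‖ ^ p k ≤ Er n)
    (key : ∀ (C : ℝ) (K : ℕ), ∃ nk : ℕ × ℕ, K < nk.2 ∧ C < ‖A nk.1 nk.2‖ ^ p nk.2) :
    ∃ x : ℕ → ℂ, (Summable fun k => ‖x k‖ ^ p k) ∧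
      ∀ B : ℝ, ∃ n : ℕ, ∀ l : ℂ,
        Tendsto (fun N => ∑ j ∈ Finset.range N, A n j * x j) atTop (𝓝 l) → B < ‖l‖ := by
  classical
  obtain ⟨n_, k_, P_, Q_, hkstep, hP0, hQ0, hPsucc, hQsucc, hval⟩ :
      ∃ (n_ k_ : ℕ → ℕ) (P_ Q_ : ℕ → ℝ),
        (∀ m, k_ m < k_ (m+1)) ∧ P_ 0 = 0 ∧ Q_ 0 = 1 ∧
        (∀ m, P_ (m+1) = P_ m + Mc (k_ m) * (((m:ℝ) + P_ m) / ‖A (n_ m) (k_ m)‖)) ∧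
        (∀ m, Q_ (m+1) = max (Q_ m) (Er (n_ m))) ∧
        (∀ m : ℕ, max ((m:ℝ) + P_ m) 1 * 2 ^ m * Q_ m < ‖A (n_ m) (k_ m)‖ ^ p (k_ m)) := by
    refine ⟨fun m => (stp A p key (st A p Mc Er key m) m).1,
            fun m => (stp A p key (st A p Mc Er key m) m).2,
            fun m => (st A p Mc Er key m).2.1,
            fun m => (st A p Mc Er key m).2.2, ?_, rfl, rfl, ?_, ?_, ?_⟩
    · intro m
      have h1 : (st A p Mc Er key (m+1)).1 = (stp A p key (st A p Mc Er key m) m).2 := rfl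
      have h2 : (st A p Mc Er key (m+1)).1 <
          (stp A p key (st A p Mc Er key (m+1)) (m+1)).2 :=
        (key (max (((m+1:ℕ):ℝ) + (st A p Mc Er key (m+1)).2.1) 1 * 2 ^ (m+1)
          * (st A p Mc Er key (m+1)).2.2) ((st A p Mc Er key (m+1)).1)).choose_spec.1
      rwa [h1] at h2
    · intro m; rfl
    · intro m; rfl
    · intro m
      exact (key (max ((m:ℝ) + (st A p Mc Er key m).2.1) 1 * 2 ^ m
        * (st A p Mc Er key m).2.2) ((st A p Mc Er key m).1)).choose_spec.2
  have hkmono : StrictMono k_ := strictMono_nat_of_lt_succ hkstep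
  have hPnn : ∀ m, 0 ≤ P_ m := by
    intro m
    induction m with
    | zero => simp [hP0]
    | succ m ih =>
      rw [hPsucc m]
      have h1 : (0:ℝ) ≤ Mc (k_ m) := le_trans zero_le_one (hMc1 _)
      have h2 : (0:ℝ) ≤ ((m:ℝ) + P_ m) / ‖A (n_ m) (k_ m)‖ :=
        div_nonneg (add_nonneg (Nat.cast_nonneg m) ih) (norm_nonneg _)
      have := mul_nonneg h1 h2
      linarith
  have hcnn : ∀ m : ℕ, (0:ℝ) ≤ (m:ℝ) + P_ m :=
    fun m => add_nonneg (Nat.cast_nonneg m) (hPnn m)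
  have hQ1 : ∀ m, 1 ≤ Q_ m := by
    intro m; induction m with
    | zero => simp [hQ0]
    | succ m ih => rw [hQsucc]; exact le_trans ih (le_max_left _ _)
  have hQmono : Monotone Q_ :=
    monotone_nat_of_le_succ fun m => by rw [hQsucc]; exact le_max_left _ _
  have hErQ : ∀ i j, i < j → Er (n_ i) ≤ Q_ j := by
    intro i j hij
    have h1 : Er (n_ i) ≤ Q_ (i+1) := by rw [hQsucc]; exact le_max_right _ _
    exact h1.trans (hQmono hij)
  have hvpos : ∀ m, 0 < ‖A (n_ m) (k_ m)‖ ^ p (k_ m) := by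
    intro m
    refine lt_trans ?_ (hval m)
    have h1 := hQ1 m
    have h2 : (0:ℝ) < max ((m:ℝ) + P_ m) 1 := lt_of_lt_of_le one_pos (le_max_right _ _)
    have h3 : (0:ℝ) < (2:ℝ) ^ m := by positivity
    exact mul_pos (mul_pos h2 h3) (lt_of_lt_of_le one_pos h1)
  have hApos : ∀ m, 0 < ‖A (n_ m) (k_ m)‖ := by
    intro m
    rcases (norm_nonneg (A (n_ m) (k_ m))).lt_or_eq with h|h
    · exact h
    · exfalso
      have := hvpos m
      rw [← h, Real.zero_rpow (hp _).ne'] at this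
      exact lt_irrefl _ this
  have hAne : ∀ m, A (n_ m) (k_ m) ≠ 0 := fun m => norm_pos_iff.1 (hApos m)
  set w : ℕ → ℝ := fun m => ((m:ℝ) + P_ m) / ‖A (n_ m) (k_ m)‖ with hw
  set x : ℕ → ℂ := fun j => if h : ∃ m, k_ m = j then
      ((((h.choose : ℝ) + P_ h.choose : ℝ) : ℂ) / A (n_ h.choose) j) else 0 with hxdef
  have hxval : ∀ m, x (k_ m) = ((((m:ℝ) + P_ m : ℝ)) : ℂ) / A (n_ m) (k_ m) := by
    intro m
    have h : ∃ m', k_ m' = k_ m := ⟨m, rfl⟩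
    have hch : h.choose = m := hkmono.injective h.choose_spec
    simp only [hxdef]
    rw [dif_pos h, hch]
  have hx0 : ∀ j, (∀ m, k_ m ≠ j) → x j = 0 := by
    intro j hj
    simp only [hxdef]
    rw [dif_neg]
    rintro ⟨m, hm⟩; exact hj m hm
  have hxnorm : ∀ m, ‖x (k_ m)‖ = w m := by
    intro m
    rw [hxval m, norm_div, Complex.norm_real, Real.norm_eq_abs, abs_of_nonneg (hcnn m)]
  have hxp : ∀ m, ‖x (k_ m)‖ ^ p (k_ m) * Q_ m ≤ (2:ℝ)⁻¹ ^ m := by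
    intro m
    have hQpos : (0:ℝ) < Q_ m := lt_of_lt_of_le one_pos (hQ1 m)
    have hMx : (0:ℝ) < max ((m:ℝ) + P_ m) 1 := lt_of_lt_of_le one_pos (le_max_right _ _)
    have h2m : (0:ℝ) < 2 ^ m := by positivity
    have hcp : ((m:ℝ) + P_ m) ^ p (k_ m) ≤ max ((m:ℝ) + P_ m) 1 := by
      rcases le_total ((m:ℝ) + P_ m) 1 with h|h
      · exact le_trans (Real.rpow_le_one (hcnn m) h (hp _).le) (le_max_right _ _)
      · exact le_trans (rpow_le_self h (hp1 _)) (le_max_left _ _)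
    have h1 : ‖x (k_ m)‖ ^ p (k_ m) ≤ ((2:ℝ) ^ m * Q_ m)⁻¹ := by
      rw [hxnorm m]
      simp only [hw]
      rw [Real.div_rpow (hcnn m) (norm_nonneg _)]
      have h2 : ((m:ℝ) + P_ m) ^ p (k_ m) / ‖A (n_ m) (k_ m)‖ ^ p (k_ m)
          ≤ max ((m:ℝ) + P_ m) 1 / (max ((m:ℝ) + P_ m) 1 * 2 ^ m * Q_ m) :=
        div_le_div₀ hMx.le hcp (mul_pos (mul_pos hMx h2m) hQpos) (hval m).le
      refine h2.trans (le_of_eq ?_)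
      field_simp
    calc ‖x (k_ m)‖ ^ p (k_ m) * Q_ m ≤ ((2:ℝ) ^ m * Q_ m)⁻¹ * Q_ m :=
        mul_le_mul_of_nonneg_right h1 hQpos.le
      _ = (2:ℝ)⁻¹ ^ m := by
        rw [mul_inv, mul_assoc, inv_mul_cancel₀ hQpos.ne', mul_one, ← inv_pow]
  have hxple : ∀ m, ‖x (k_ m)‖ ^ p (k_ m) ≤ (2:ℝ)⁻¹ ^ m := by
    intro m
    have h1 := hxp m
    have h2 : (0:ℝ) ≤ ‖x (k_ m)‖ ^ p (k_ m) := Real.rpow_nonneg (norm_nonneg _) _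
    have h3 := mul_le_mul_of_nonneg_left (hQ1 m) h2
    rw [mul_one] at h3
    linarith
  refine ⟨x, ?_, ?_⟩
  · refine (hkmono.injective.summable_iff ?_).1 ?_
    · intro j hj
      have hxz : x j = 0 := hx0 j (fun m hm => hj ⟨m, hm⟩)
      rw [hxz]
      simp [Real.zero_rpow (hp j).ne']
    · exact Summable.of_nonneg_of_le (fun m => Real.rpow_nonneg (norm_nonneg _) _)
        hxple (summable_geometric_of_lt_one (by norm_num) (by norm_num))
  · intro B
    obtain ⟨m, hm⟩ := exists_nat_gt (B + 2)
    refine ⟨n_ m, fun l hl => ?_⟩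
    have hge : ∀ N, k_ m < N → (m:ℝ) - 2 ≤ ‖∑ j ∈ Finset.range N, A (n_ m) j * x j‖ := by
      intro N hN
      set f : ℕ → ℂ := fun j => A (n_ m) j * x j with hf
      have hmem : k_ m ∈ Finset.range N := Finset.mem_range.2 hN
      have hsplit : ∑ j ∈ Finset.range N, f j
          = f (k_ m) + ∑ j ∈ (Finset.range N).erase (k_ m), f j :=
        (Finset.add_sum_erase _ f hmem).symm
      have hmain : ‖f (k_ m)‖ = (m:ℝ) + P_ m := by
        simp only [hf]
        rw [hxval m, mul_comm, div_mul_cancel₀ _ (hAne m), Complex.norm_real,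
          Real.norm_eq_abs, abs_of_nonneg (hcnn m)]
      have hrest : ∑ j ∈ (Finset.range N).erase (k_ m), ‖f j‖ ≤ P_ m + 2 := by
        set u := ((Finset.range N).erase m).image k_ with hu
        have h1 : ∑ j ∈ (Finset.range N).erase (k_ m), ‖f j‖
            = ∑ j ∈ ((Finset.range N).erase (k_ m)) ∩ u, ‖f j‖ := by
          refine (Finset.sum_subset Finset.inter_subset_left ?_).symm
          intro j hj hj'
          have hju : j ∉ u := fun h => hj' (Finset.mem_inter.2 ⟨hj, h⟩)
          have hxj : x j = 0 := by
            refine hx0 j ?_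
            intro i hi
            apply hju
            rw [hu]
            refine Finset.mem_image.2 ⟨i, Finset.mem_erase.2 ⟨?_, ?_⟩, hi⟩
            · rintro rfl
              exact (Finset.mem_erase.1 hj).1 hi.symm
            · have hle : i ≤ k_ i := hkmono.le_apply
              have hjN : j ∈ Finset.range N := Finset.mem_of_mem_erase hj
              refine Finset.mem_range.2 (lt_of_le_of_lt ?_ (Finset.mem_range.1 hjN))
              rw [← hi]; exact hle
          simp only [hf]
          rw [hxj, mul_zero, norm_zero]
        have h2 : ∑ j ∈ ((Finset.range N).erase (k_ m)) ∩ u, ‖f j‖ ≤ ∑ j ∈ u, ‖f j‖ :=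
          Finset.sum_le_sum_of_subset_of_nonneg Finset.inter_subset_right
            (fun j _ _ => norm_nonneg _)
        have h3 : ∑ j ∈ u, ‖f j‖ = ∑ i ∈ (Finset.range N).erase m, ‖f (k_ i)‖ := by
          rw [hu]
          exact Finset.sum_image (fun i _ j _ h => hkmono.injective h)
        have h4 : ∀ i ∈ (Finset.range N).erase m,
            ‖f (k_ i)‖ ≤ (if i < m then P_ (i+1) - P_ i else 0) + (2:ℝ)⁻¹ ^ i := by
          intro i hi
          obtain ⟨hine, hiN⟩ := Finset.mem_erase.1 hi
          rcases lt_or_gt_of_ne hine with hlt|hgt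
          · rw [if_pos hlt]
            have hb1 : ‖f (k_ i)‖ ≤ Mc (k_ i) * w i := by
              simp only [hf]
              rw [norm_mul]
              exact mul_le_mul (hMcA _ _) (le_of_eq (hxnorm i)) (norm_nonneg _)
                (le_trans zero_le_one (hMc1 _))
            have hb2 : P_ (i+1) - P_ i = Mc (k_ i) * w i := by
              rw [hPsucc i]; simp only [hw]; ring
            have h2i : (0:ℝ) ≤ (2:ℝ)⁻¹ ^ i := by positivity
            linarith
          · rw [if_neg (not_lt.2 hgt.le)]
            have htp : ‖f (k_ i)‖ ^ p (k_ i) ≤ (2:ℝ)⁻¹ ^ i := by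
              simp only [hf]
              rw [norm_mul, Real.mul_rpow (norm_nonneg _) (norm_nonneg _)]
              calc ‖A (n_ m) (k_ i)‖ ^ p (k_ i) * ‖x (k_ i)‖ ^ p (k_ i)
                  ≤ Q_ i * ‖x (k_ i)‖ ^ p (k_ i) := by
                    have hEq := (hErA (n_ m) (k_ i)).trans (hErQ m i hgt)
                    exact mul_le_mul_of_nonneg_right hEq
                      (Real.rpow_nonneg (norm_nonneg _) _)
                _ = ‖x (k_ i)‖ ^ p (k_ i) * Q_ i := mul_comm _ _
                _ ≤ (2:ℝ)⁻¹ ^ i := hxp i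
            have h2le1 : ((2:ℝ)⁻¹) ^ i ≤ 1 := pow_le_one₀ (by norm_num) (by norm_num)
            have ht1 : ‖f (k_ i)‖ ≤ 1 :=
              le_one_of_rpow (norm_nonneg _) (htp.trans h2le1) (hp _)
            have hle := le_rpow_self (q := p (k_ i)) (norm_nonneg (f (k_ i))) ht1 (hp (k_ i)) (hp1 (k_ i))
            rw [zero_add]
            exact hle.trans htp
        have h5 : ∑ i ∈ (Finset.range N).erase m,
            ((if i < m then P_ (i+1) - P_ i else 0) + (2:ℝ)⁻¹ ^ i) ≤ P_ m + 2 := by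
          have hterm_nonneg : ∀ i : ℕ,
              (0:ℝ) ≤ (if i < m then P_ (i+1) - P_ i else 0) + (2:ℝ)⁻¹ ^ i := by
            intro i
            have h2i : (0:ℝ) ≤ (2:ℝ)⁻¹ ^ i := by positivity
            split_ifs with h
            · have hb1 : (0:ℝ) ≤ Mc (k_ i) * w i :=
                mul_nonneg (le_trans zero_le_one (hMc1 _))
                  (div_nonneg (hcnn i) (norm_nonneg _))
              have hb2 : P_ (i+1) - P_ i = Mc (k_ i) * w i := by
                rw [hPsucc i]; simp only [hw]; ring
              linarith
            · linarith
          have hsub : ∑ i ∈ (Finset.range N).erase m,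
              ((if i < m then P_ (i+1) - P_ i else 0) + (2:ℝ)⁻¹ ^ i)
              ≤ ∑ i ∈ Finset.range N,
              ((if i < m then P_ (i+1) - P_ i else 0) + (2:ℝ)⁻¹ ^ i) :=
            Finset.sum_le_sum_of_subset_of_nonneg (Finset.erase_subset _ _)
              (fun i _ _ => hterm_nonneg i)
          refine hsub.trans ?_
          rw [Finset.sum_add_distrib]
          have hmN : m ≤ N := le_of_lt (lt_of_le_of_lt hkmono.le_apply hN)
          have hA1 : ∑ i ∈ Finset.range N, (if i < m then P_ (i+1) - P_ i else 0)
              = P_ m := by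
            rw [← Finset.sum_subset (Finset.range_subset_range.2 hmN)
              (fun i _ hnot => if_neg (fun hc => hnot (Finset.mem_range.2 hc))),
              Finset.sum_congr rfl (fun i hi => if_pos (Finset.mem_range.1 hi)),
              Finset.sum_range_sub P_, hP0, sub_zero]
          have hA2 : ∑ i ∈ Finset.range N, (2:ℝ)⁻¹ ^ i ≤ 2 := by
            have hs := Summable.sum_le_tsum (Finset.range N) (fun i _ => by positivity)
              (summable_geometric_of_lt_one (by norm_num) (by norm_num : (2:ℝ)⁻¹ < 1))
            rw [tsum_geometric_of_lt_one (by norm_num) (by norm_num)] at hs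
            norm_num at hs
            linarith
          linarith [hA2]
        calc ∑ j ∈ (Finset.range N).erase (k_ m), ‖f j‖
            = ∑ j ∈ ((Finset.range N).erase (k_ m)) ∩ u, ‖f j‖ := h1
          _ ≤ ∑ j ∈ u, ‖f j‖ := h2
          _ = ∑ i ∈ (Finset.range N).erase m, ‖f (k_ i)‖ := h3
          _ ≤ ∑ i ∈ (Finset.range N).erase m,
              ((if i < m then P_ (i+1) - P_ i else 0) + (2:ℝ)⁻¹ ^ i) :=
            Finset.sum_le_sum h4
          _ ≤ P_ m + 2 := h5
      have hnr : ‖∑ j ∈ (Finset.range N).erase (k_ m), f j‖ ≤ P_ m + 2 :=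
        le_trans (norm_sum_le _ _) hrest
      have h6 : ‖f (k_ m)‖ ≤ ‖∑ j ∈ Finset.range N, f j‖
          + ‖∑ j ∈ (Finset.range N).erase (k_ m), f j‖ := by
        have heq : f (k_ m) = (∑ j ∈ Finset.range N, f j)
            - ∑ j ∈ (Finset.range N).erase (k_ m), f j := by
          rw [hsplit]; ring
        rw [heq]
        exact norm_sub_le _ _
      have hPm := hPnn m
      rw [hmain] at h6
      linarith
    have hlim : (m:ℝ) - 2 ≤ ‖l‖ := by
      refine ge_of_tendsto hl.norm (eventually_atTop.2 ⟨k_ m + 1, fun N hN => hge N ?_⟩)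
      exact Nat.lt_of_succ_le hN
    linarith

end GE8

open GE8 in
/-- Grosse-Erdmann's characterization: for `0 < p_k ≤ 1`, `A ∈ (l(p), l_∞)` iff
`sup_n sup_k |a_{nk} L^{-1}|^{p_k} < ∞` for some integer `L ≥ 1`. -/
theorem stmt8 (p : ℕ → ℝ) (hp : ∀ k, 0 < p k) (hp1 : ∀ k, p k ≤ 1)
    (A : ℕ → ℕ → ℂ) :
    ((∀ x : ℕ → ℂ, (Summable fun k => ‖x k‖ ^ p k) →
      ∃ Ax : ℕ → ℂ,
        (∀ n, Tendsto (fun m => ∑ k ∈ Finset.range m, A n k * x k) atTop (nhds (Ax n))) ∧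
        BddAbove (Set.range fun n => ‖Ax n‖))
    ↔
    (∃ L : ℕ, 1 ≤ L ∧ ∃ C : ℝ,
      ∀ n k : ℕ, ‖A n k * ((L : ℂ))⁻¹‖ ^ p k ≤ C)) := by
  constructor
  · intro H
    -- column bounds
    have hcol : ∀ k, ∃ M, ∀ n, ‖A n k‖ ≤ M := by
      intro k
      have he : Summable fun j => ‖(if j = k then (1:ℂ) else 0)‖ ^ p j := by
        apply summable_of_ne_finset_zero (s := {k})
        intro j hj
        have hjk : j ≠ k := by simpa using hj
        simp [if_neg hjk, Real.zero_rpow (hp j).ne']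
      obtain ⟨Ax, htend, hbdd⟩ := H (fun j => if j = k then (1:ℂ) else 0) he
      obtain ⟨B, hB⟩ := hbdd
      refine ⟨B, fun n => ?_⟩
      have h1 : Tendsto (fun m => ∑ j ∈ Finset.range m,
          A n j * (if j = k then (1:ℂ) else 0)) atTop (𝓝 (A n k)) := by
        refine Tendsto.congr' ?_ tendsto_const_nhds
        filter_upwards [eventually_gt_atTop k] with m hm
        simp only [mul_ite, mul_one, mul_zero]
        rw [Finset.sum_ite_eq' (Finset.range m) k (fun j => A n j)]
        simp [Finset.mem_range.2 hm]
      have h2 : Ax n = A n k := tendsto_nhds_unique (htend n) h1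
      have h3 : ‖Ax n‖ ≤ B := hB (Set.mem_range_self n)
      rwa [h2] at h3
    choose M hM using hcol
    have hMc1 : ∀ k, 1 ≤ max (M k) 1 := fun k => le_max_right _ _
    have hMcA : ∀ n k, ‖A n k‖ ≤ max (M k) 1 := fun n k => (hM k n).trans (le_max_left _ _)
    have hMcp : ∀ n k, ‖A n k‖ ^ p k ≤ max (M k) 1 := by
      intro n k
      calc ‖A n k‖ ^ p k ≤ (max (M k) 1) ^ p k :=
            Real.rpow_le_rpow (norm_nonneg _) (hMcA n k) (hp k).le
        _ ≤ max (M k) 1 := rpow_le_self (hMc1 k) (hp1 k)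
    -- row bounds
    have hrow : ∀ n, ∃ E, ∀ k, ‖A n k‖ ^ p k ≤ E := by
      intro n
      by_contra hc
      push_neg at hc
      have hdiv : ∀ (C : ℝ) (K : ℕ), ∃ k, K < k ∧ C < ‖A n k‖ ^ p k := by
        intro C K
        obtain ⟨D, hD⟩ := Finset.exists_le
          ((Finset.range (K+1)).image (fun k => ‖A n k‖ ^ p k))
        obtain ⟨k, hk⟩ := hc (max C D)
        refine ⟨k, ?_, lt_of_le_of_lt (le_max_left _ _) hk⟩
        by_contra hkK
        push_neg at hkK
        have hD1 : ‖A n k‖ ^ p k ≤ D := hD _ (Finset.mem_image.2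
          ⟨k, Finset.mem_range.2 (Nat.lt_succ_of_le hkK), rfl⟩)
        have hD2 := lt_of_le_of_lt (le_max_right C D) hk
        linarith
      obtain ⟨x, hx, hnolim⟩ := row_divergent p (A n) hp hdiv
      obtain ⟨Ax, htend, _⟩ := H x hx
      exact hnolim (Ax n) (htend n)
    choose E hE using hrow
    by_contra hcond
    push_neg at hcond
    have hkey : ∀ (C : ℝ) (K : ℕ), ∃ nk : ℕ × ℕ, K < nk.2 ∧ C < ‖A nk.1 nk.2‖ ^ p nk.2 := by
      intro C K
      obtain ⟨D, hD⟩ := Finset.exists_le ((Finset.range (K+1)).image (fun k => max (M k) 1))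
      obtain ⟨n, k, hk⟩ := hcond 1 le_rfl (max C D)
      rw [Nat.cast_one, inv_one, mul_one] at hk
      refine ⟨(n, k), ?_, lt_of_le_of_lt (le_max_left _ _) hk⟩
      by_contra hkK
      push_neg at hkK
      have hD1 : max (M k) 1 ≤ D := hD _ (Finset.mem_image.2
        ⟨k, Finset.mem_range.2 (Nat.lt_succ_of_le hkK), rfl⟩)
      have hD2 := lt_of_le_of_lt (le_max_right C D) hk
      have hD3 := hMcp n k
      linarith
    obtain ⟨x, hx, hB⟩ := necessity_main p hp hp1 A (fun k => max (M k) 1) E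
      hMc1 hMcA hE hkey
    obtain ⟨Ax, htend, hbdd⟩ := H x hx
    obtain ⟨B, hBub⟩ := hbdd
    obtain ⟨n, hn⟩ := hB B
    have h1 := hn (Ax n) (htend n)
    have h2 : ‖Ax n‖ ≤ B := hBub (Set.mem_range_self n)
    linarith
  · rintro ⟨L, hL, C, hC⟩
    have hL0 : (0:ℝ) < (L:ℝ) := by exact_mod_cast hL
    have hC0 : 0 ≤ C := le_trans (Real.rpow_nonneg (norm_nonneg _) _) (hC 0 0)
    have hA : ∀ n k, ‖A n k‖ ^ p k ≤ max (C * (L:ℝ)) 1 := by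
      intro n k
      have h1 := hC n k
      rw [norm_mul, norm_inv] at h1
      have hLnorm : ‖((L:ℕ):ℂ)‖ = (L:ℝ) := by simp
      rw [hLnorm, Real.mul_rpow (norm_nonneg _) (by positivity),
        Real.inv_rpow hL0.le] at h1
      have hLp_pos : 0 < (L:ℝ) ^ p k := Real.rpow_pos_of_pos hL0 _
      have h3 : ‖A n k‖ ^ p k ≤ C * (L:ℝ) ^ p k := by
        have hh := mul_le_mul_of_nonneg_right h1 hLp_pos.le
        rwa [inv_mul_cancel_right₀ hLp_pos.ne'] at hh
      have h4 : (L:ℝ) ^ p k ≤ (L:ℝ) := by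
        have hL1 : (1:ℝ) ≤ (L:ℝ) := by exact_mod_cast hL
        exact rpow_le_self hL1 (hp1 k)
      calc ‖A n k‖ ^ p k ≤ C * (L:ℝ) ^ p k := h3
        _ ≤ C * (L:ℝ) := mul_le_mul_of_nonneg_left h4 hC0
        _ ≤ max (C * (L:ℝ)) 1 := le_max_left _ _
    intro x hx
    exact sufficiency p hp hp1 A (max (C * (L:ℝ)) 1) (le_max_right _ _) hA x hx
end

section
/- If x ∈ l(r,s,t,p;B) with y = A(r,s,t;B)x ∈ l(p), and a = (a_k) is any sequence, then for every n, Σ_{k=0}^n a_k x_k = (Ey)_n, where E = (e_{nk}) is the triangle with e_{nk} = r_k [ a_k/(u s_0 t_k) + Σ_{j=k}^{k+1} (-1)^{j-k} (D^{(s)}_{j-k}/t_j) Σ_{l=k+1}^n ((-v)^{l-j}/u^{l-j+1}) a_l + Σ_{j=k+2}^n (-1)^{j-k} (D^{(s)}_{j-k}/t_j) Σ_{l=j}^n ((-v)^{l-j}/u^{l-j+1}) a_l ] for 0 ≤ k ≤ n, e_{nk} = 0 for k > n. -/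
open Filter Finset Topology

/-- The triangle `E = (e_{nk})` associated with a sequence `a`. -/
noncomputable def Emat (s t r : ℕ → ℂ) (u v : ℂ) (D : ℕ → ℂ) (a : ℕ → ℂ) (n k : ℕ) : ℂ :=
  if k ≤ n then
    r k * (a k / (u * s 0 * t k)
      + ∑ j ∈ Finset.Icc k (k + 1), (-1 : ℂ) ^ (j - k) * (D (j - k) / t j) *
          (∑ l ∈ Finset.Icc (k + 1) n, ((-v) ^ (l - j) / u ^ (l - j + 1)) * a l)
      + ∑ j ∈ Finset.Icc (k + 2) n, (-1 : ℂ) ^ (j - k) * (D (j - k) / t j) *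
          (∑ l ∈ Finset.Icc j n, ((-v) ^ (l - j) / u ^ (l - j + 1)) * a l))
  else 0

noncomputable def zB (u v : ℂ) (x : ℕ → ℂ) : ℕ → ℂ :=
  fun k => u * x k + v * (if k = 0 then 0 else x (k - 1))

lemma lemA (r s t : ℕ → ℂ) (u v : ℂ) (x : ℕ → ℂ) (hr : ∀ n, r n ≠ 0) (m : ℕ) :
    r m * GmB r s t u v x m = ∑ k ∈ Finset.range (m + 1), s (m - k) * t k * zB u v x k := by
  rw [GmB, ← mul_assoc, mul_inv_cancel₀ (hr m), one_mul]
  have h1 : ∀ k ∈ Finset.range (m + 1), s (m - k) * t k * zB u v x k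
      = s (m - k) * t k * u * x k
        + s (m - k) * t k * v * (if k = 0 then 0 else x (k - 1)) := by
    intro k _; simp only [zB]; ring
  rw [Finset.sum_congr rfl h1, Finset.sum_add_distrib,
    Finset.sum_range_succ' (fun k => s (m - k) * t k * v * (if k = 0 then 0 else x (k - 1))) m,
    Finset.sum_range_succ (fun k => s (m - k) * t k * u * x k) m]
  simp only [Nat.sub_self, if_pos rfl, if_true, mul_zero, add_zero, Nat.succ_ne_zero, if_false,
    Nat.add_sub_cancel]
  have h2 : ∀ k ∈ Finset.range m,
      (s (m - k) * t k * u + s (m - k - 1) * t (k + 1) * v) * x k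
      = s (m - k) * t k * u * x k + s (m - (k + 1)) * t (k + 1) * v * x k := by
    intro k hk
    have : m - (k + 1) = m - k - 1 := by omega
    rw [this]; ring
  rw [Finset.sum_congr rfl h2, Finset.sum_add_distrib]
  ring

lemma lemB (r s t : ℕ → ℂ) (u v : ℂ) (D : ℕ → ℂ) (x y : ℕ → ℂ)
    (hD : ∀ n, ∑ k ∈ Finset.range (n + 1), (-1 : ℂ) ^ k * D k * s (n - k) =
      if n = 0 then 1 else 0)
    (hRy : ∀ m, r m * y m = ∑ k ∈ Finset.range (m + 1), s (m - k) * t k * zB u v x k)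
    (k : ℕ) :
    t k * zB u v x k
      = ∑ j ∈ Finset.range (k + 1), (-1 : ℂ) ^ (k - j) * D (k - j) * (r j * y j) := by
  have h1 : ∀ j ∈ Finset.range (k + 1),
      (-1 : ℂ) ^ (k - j) * D (k - j) * (r j * y j)
      = ∑ i ∈ Finset.range (j + 1),
          (-1 : ℂ) ^ (k - j) * D (k - j) * (s (j - i) * t i * zB u v x i) := by
    intro j _
    rw [hRy j, Finset.mul_sum]
  rw [Finset.sum_congr rfl h1]
  have h2 := Finset.sum_Ico_Ico_comm 0 (k + 1)
    (fun i j => (-1 : ℂ) ^ (k - j) * D (k - j) * (s (j - i) * t i * zB u v x i))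
  simp only [← Finset.range_eq_Ico] at h2
  rw [← h2]
  have h3 : ∀ i ∈ Finset.range (k + 1),
      (∑ j ∈ Finset.Ico i (k + 1),
        (-1 : ℂ) ^ (k - j) * D (k - j) * (s (j - i) * t i * zB u v x i))
      = (if i = k then 1 else 0) * (t i * zB u v x i) := by
    intro i hi
    simp only [Finset.mem_range] at hi
    have hik : i ≤ k := by omega
    have h4 : (∑ j ∈ Finset.Ico i (k + 1),
        (-1 : ℂ) ^ (k - j) * D (k - j) * (s (j - i) * t i * zB u v x i))
        = (∑ j ∈ Finset.Ico i (k + 1), (-1 : ℂ) ^ (k - j) * D (k - j) * s (j - i))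
            * (t i * zB u v x i) := by
      rw [Finset.sum_mul]
      exact Finset.sum_congr rfl fun j _ => by ring
    rw [h4]
    congr 1
    rw [Finset.sum_Ico_eq_sum_range]
    have h5 : ∀ m ∈ Finset.range (k + 1 - i),
        (-1 : ℂ) ^ (k - (i + m)) * D (k - (i + m)) * s ((i + m) - i)
        = (-1 : ℂ) ^ (k - i - m) * D (k - i - m) * s m := by
      intro m hm
      have e1 : k - (i + m) = k - i - m := by omega
      have e2 : (i + m) - i = m := by omega
      rw [e1, e2]
    rw [Finset.sum_congr rfl h5]
    have h6 : k + 1 - i = (k - i) + 1 := by omega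
    rw [h6]
    have h7 := Finset.sum_range_reflect
      (fun m => (-1 : ℂ) ^ m * D m * s (k - i - m)) ((k - i) + 1)
    have h8 : ∀ m ∈ Finset.range ((k - i) + 1),
        (-1 : ℂ) ^ ((k - i) + 1 - 1 - m) * D ((k - i) + 1 - 1 - m) * s (k - i - ((k - i) + 1 - 1 - m))
        = (-1 : ℂ) ^ (k - i - m) * D (k - i - m) * s m := by
      intro m hm
      simp only [Finset.mem_range] at hm
      have e1 : (k - i) + 1 - 1 - m = k - i - m := by omega
      have e2 : k - i - (k - i - m) = m := by omega
      rw [e1, e2]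
    rw [← Finset.sum_congr rfl h8, h7, hD (k - i)]
    by_cases hik' : i = k
    · simp [hik']
    · have : ¬ (k - i = 0) := by omega
      simp [this, hik']
  rw [Finset.sum_congr rfl h3]
  have h9 : ∀ i ∈ Finset.range (k + 1),
      (if i = k then (1 : ℂ) else 0) * (t i * zB u v x i)
      = if i = k then t i * zB u v x i else 0 := by
    intro i _; split <;> simp
  rw [Finset.sum_congr rfl h9, Finset.sum_ite_eq']
  simp

lemma lemC (u v : ℂ) (x : ℕ → ℂ) (hu : u ≠ 0) (m : ℕ) :
    x m = ∑ k ∈ Finset.range (m + 1), ((-v) ^ (m - k) / u ^ (m - k + 1)) * zB u v x k := by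
  induction m with
  | zero =>
    simp [zB]
    field_simp
  | succ m ih =>
    rw [Finset.sum_range_succ]
    have h1 : ∀ k ∈ Finset.range (m + 1),
        ((-v) ^ (m + 1 - k) / u ^ (m + 1 - k + 1)) * zB u v x k
        = (-v / u) * (((-v) ^ (m - k) / u ^ (m - k + 1)) * zB u v x k) := by
      intro k hk
      simp only [Finset.mem_range] at hk
      have e : m + 1 - k = (m - k) + 1 := by omega
      rw [e]
      rw [pow_succ, pow_succ]
      field_simp
    rw [Finset.sum_congr rfl h1, ← Finset.mul_sum, ← ih]
    simp only [Nat.sub_self, pow_zero, pow_one, zB, Nat.succ_ne_zero, if_false,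
      Nat.add_sub_cancel]
    field_simp
    ring

lemma lemKey (s t r : ℕ → ℂ) (u v : ℂ) (D : ℕ → ℂ) (a : ℕ → ℂ) (n j : ℕ)
    (hj : j ≤ n) (hD0 : D 0 = (s 0)⁻¹) (hu : u ≠ 0) (hs : s 0 ≠ 0) (ht : ∀ k, t k ≠ 0) :
    Emat s t r u v D a n j = r j * ∑ k ∈ Finset.Icc j n,
      (-1 : ℂ) ^ (k - j) * (D (k - j) / t k) *
        (∑ m ∈ Finset.Icc k n, ((-v) ^ (m - k) / u ^ (m - k + 1)) * a m) := by
  rw [Emat, if_pos hj]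
  congr 1
  rcases eq_or_lt_of_le hj with hjn | hjn
  · subst hjn
    have e1 : Finset.Icc (j + 1) j = (∅ : Finset ℕ) := Finset.Icc_eq_empty (by omega)
    have e2 : Finset.Icc (j + 2) j = (∅ : Finset ℕ) := Finset.Icc_eq_empty (by omega)
    rw [e1, e2]
    simp only [Finset.sum_empty, mul_zero, Finset.sum_const_zero, add_zero, Finset.Icc_self,
      Finset.sum_singleton, Nat.sub_self, pow_zero, one_mul]
    rw [hD0]
    ring
  · -- j < n
    have hpair : Finset.Icc j (j + 1) = {j, j + 1} := by
      ext i; simp [Finset.mem_Icc]; omega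
    rw [hpair, Finset.sum_pair (by omega : j ≠ j + 1)]
    have hsplit : Finset.Icc j n = Finset.Ico j (n + 1) := (Finset.Ico_add_one_right_eq_Icc j n).symm
    rw [hsplit, Finset.sum_eq_sum_Ico_succ_bot (by omega : j < n + 1),
      Finset.sum_eq_sum_Ico_succ_bot (by omega : j + 1 < n + 1),
      (Finset.Ico_add_one_right_eq_Icc (j + 2) n)]
    have hcj : (∑ m ∈ Finset.Icc j n, ((-v) ^ (m - j) / u ^ (m - j + 1)) * a m)
        = ((-v) ^ (j - j) / u ^ (j - j + 1)) * a j
          + ∑ m ∈ Finset.Icc (j + 1) n, ((-v) ^ (m - j) / u ^ (m - j + 1)) * a m := by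
      rw [hsplit, Finset.sum_eq_sum_Ico_succ_bot (by omega : j < n + 1),
        Finset.Ico_add_one_right_eq_Icc (j + 1) n]
    rw [hcj]
    simp only [Nat.sub_self, Nat.add_sub_cancel_left, pow_zero, pow_one, zero_add, one_mul]
    rw [hD0]
    ring

/-- Abel-type summation identity: if `y = A(r,s,t;B)x ∈ l(p)` with `x ∈ l(r,s,t,p;B)`,
then for every `n`, `Σ_{k=0}^n a_k x_k = (Ey)_n`. -/
theorem stmt10 (r s t : ℕ → ℂ) (u v : ℂ) (D : ℕ → ℂ) (p : ℕ → ℝ)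
    (hp : ∀ k, 0 < p k) (hpb : BddAbove (Set.range p))
    (hr : ∀ n, r n ≠ 0) (ht : ∀ n, t n ≠ 0) (hs : s 0 ≠ 0) (hu : u ≠ 0) (hv : v ≠ 0)
    (hD : ∀ n, ∑ k ∈ Finset.range (n + 1), (-1 : ℂ) ^ k * D k * s (n - k) =
      if n = 0 then 1 else 0)
    (a : ℕ → ℂ) (x y : ℕ → ℂ)
    (hx : Summable fun n => ‖GmB r s t u v x n‖ ^ p n)
    (hy : ∀ n, y n = GmB r s t u v x n) :
    ∀ n : ℕ, ∑ k ∈ Finset.range (n + 1), a k * x k =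
      ∑ k ∈ Finset.range (n + 1), Emat s t r u v D a n k * y k := by
  intro n
  have hD0 : D 0 = (s 0)⁻¹ := by
    have h := hD 0
    simp at h
    exact eq_inv_of_mul_eq_one_left h
  have hRy : ∀ m, r m * y m = ∑ k ∈ Finset.range (m + 1), s (m - k) * t k * zB u v x k :=
    fun m => by rw [hy m]; exact lemA r s t u v x hr m
  have hz := lemB r s t u v D x y hD hRy
  have hxC := lemC u v x hu
  calc
    ∑ m ∈ Finset.range (n + 1), a m * x m
      = ∑ m ∈ Finset.range (n + 1), ∑ k ∈ Finset.range (m + 1),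
          a m * (((-v) ^ (m - k) / u ^ (m - k + 1)) * zB u v x k) := by
        refine Finset.sum_congr rfl fun m _ => ?_
        rw [hxC m, Finset.mul_sum]
    _ = ∑ k ∈ Finset.range (n + 1), ∑ m ∈ Finset.Ico k (n + 1),
          a m * (((-v) ^ (m - k) / u ^ (m - k + 1)) * zB u v x k) := by
        have h2 := Finset.sum_Ico_Ico_comm 0 (n + 1)
          (fun i j => a j * (((-v) ^ (j - i) / u ^ (j - i + 1)) * zB u v x i))
        simp only [← Finset.range_eq_Ico] at h2
        exact h2.symm
    _ = ∑ k ∈ Finset.range (n + 1), (t k * zB u v x k) *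
          ((∑ m ∈ Finset.Icc k n, ((-v) ^ (m - k) / u ^ (m - k + 1)) * a m) / t k) := by
        refine Finset.sum_congr rfl fun k _ => ?_
        rw [← Finset.Ico_add_one_right_eq_Icc k n, Finset.sum_div, Finset.mul_sum]
        refine Finset.sum_congr rfl fun m _ => ?_
        generalize (-v) ^ (m - k) / u ^ (m - k + 1) = W
        have h := ht k
        field_simp
    _ = ∑ k ∈ Finset.range (n + 1), ∑ j ∈ Finset.range (k + 1),
          ((-1 : ℂ) ^ (k - j) * D (k - j) * (r j * y j)) *
            ((∑ m ∈ Finset.Icc k n, ((-v) ^ (m - k) / u ^ (m - k + 1)) * a m) / t k) := by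
        refine Finset.sum_congr rfl fun k _ => ?_
        rw [hz k, Finset.sum_mul]
    _ = ∑ j ∈ Finset.range (n + 1), ∑ k ∈ Finset.Ico j (n + 1),
          ((-1 : ℂ) ^ (k - j) * D (k - j) * (r j * y j)) *
            ((∑ m ∈ Finset.Icc k n, ((-v) ^ (m - k) / u ^ (m - k + 1)) * a m) / t k) := by
        have h2 := Finset.sum_Ico_Ico_comm 0 (n + 1)
          (fun i j' => ((-1 : ℂ) ^ (j' - i) * D (j' - i) * (r i * y i)) *
            ((∑ m ∈ Finset.Icc j' n, ((-v) ^ (m - j') / u ^ (m - j' + 1)) * a m) / t j'))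
        simp only [← Finset.range_eq_Ico] at h2
        exact h2.symm
    _ = ∑ j ∈ Finset.range (n + 1),
          (r j * ∑ k ∈ Finset.Icc j n, (-1 : ℂ) ^ (k - j) * (D (k - j) / t k) *
            (∑ m ∈ Finset.Icc k n, ((-v) ^ (m - k) / u ^ (m - k + 1)) * a m)) * y j := by
        refine Finset.sum_congr rfl fun j _ => ?_
        rw [Finset.Ico_add_one_right_eq_Icc j n, Finset.mul_sum, Finset.sum_mul]
        refine Finset.sum_congr rfl fun k _ => ?_
        ring
    _ = ∑ j ∈ Finset.range (n + 1), Emat s t r u v D a n j * y j := by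
        refine Finset.sum_congr rfl fun j hj => ?_
        simp only [Finset.mem_range] at hj
        rw [lemKey s t r u v D a n j (by omega) hD0 hu hs ht]
end

section
/- Let 1 < p_k ≤ H < ∞ for all k. Then the γ-dual of l(r,s,t,p;B) equals the set of all sequences a = (a_k) for which there exists L ∈ ℕ with sup_n Σ_k |e_{nk} L^{-1}|^{p_k'} < ∞, where E = (e_{nk}) is the triangle associated to a defined by e_{nk} = r_k [ a_k/(u s_0 t_k) + Σ_{j=k}^{k+1} (-1)^{j-k}(D^{(s)}_{j-k}/t_j) Σ_{l=k+1}^n ((-v)^{l-j}/u^{l-j+1}) a_l + Σ_{j=k+2}^n (-1)^{j-k}(D^{(s)}_{j-k}/t_j) Σ_{l=j}^n ((-v)^{l-j}/u^{l-j+1}) a_l ]. -/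
open Filter Finset Topology

noncomputable def solveX (r s t : ℕ → ℂ) (u v : ℂ) (y : ℕ → ℂ) : ℕ → ℂ
  | n =>
    (s 0 * t n * u)⁻¹ * (r n * y n -
      ∑ k ∈ (Finset.range n).attach,
        (s (n - ↑k) * t ↑k * u + s (n - ↑k - 1) * t (↑k + 1) * v) * solveX r s t u v y ↑k)
  decreasing_by exact Finset.mem_range.mp k.2

lemma solveX_spec (r s t : ℕ → ℂ) (u v : ℂ) (hr : ∀ n, r n ≠ 0) (ht : ∀ n, t n ≠ 0) (hs : s 0 ≠ 0) (hu : u ≠ 0)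
    (y : ℕ → ℂ) (n : ℕ) : GmB r s t u v (solveX r s t u v y) n = y n := by
  have hne : s 0 * t n * u ≠ 0 := by
    exact mul_ne_zero (mul_ne_zero hs (ht n)) hu
  rw [GmB]
  rw [show solveX r s t u v y n = (s 0 * t n * u)⁻¹ * (r n * y n -
      ∑ k ∈ (Finset.range n).attach,
        (s (n - ↑k) * t ↑k * u + s (n - ↑k - 1) * t (↑k + 1) * v) * solveX r s t u v y ↑k)
    from by rw [solveX]]
  rw [Finset.sum_attach (Finset.range n)
    (fun k => (s (n - k) * t k * u + s (n - k - 1) * t (k + 1) * v) * solveX r s t u v y k)]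
  rw [mul_inv_cancel_left₀ hne, show ∀ a b : ℂ, a + (b - a) = b from fun a b => by ring,
    inv_mul_cancel_left₀ (hr n)]

open Finset

noncomputable def Smat (s : ℕ → ℂ) (n : ℕ) : Matrix (Fin (n+1)) (Fin (n+1)) ℂ :=
  fun i k => if (k:ℕ) ≤ (i:ℕ) then s ((i:ℕ) - (k:ℕ)) else 0

noncomputable def SmatInv (D : ℕ → ℂ) (n : ℕ) : Matrix (Fin (n+1)) (Fin (n+1)) ℂ :=
  fun i k => if (k:ℕ) ≤ (i:ℕ) then (-1:ℂ) ^ ((i:ℕ) - (k:ℕ)) * D ((i:ℕ) - (k:ℕ)) else 0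

noncomputable def Bmat (u v : ℂ) (n : ℕ) : Matrix (Fin (n+1)) (Fin (n+1)) ℂ :=
  fun i k => if (k:ℕ) = (i:ℕ) then u else if (k:ℕ) + 1 = (i:ℕ) then v else 0

noncomputable def BmatInv (u v : ℂ) (n : ℕ) : Matrix (Fin (n+1)) (Fin (n+1)) ℂ :=
  fun i k => if (k:ℕ) ≤ (i:ℕ) then (-v) ^ ((i:ℕ) - (k:ℕ)) / u ^ ((i:ℕ) - (k:ℕ) + 1) else 0

lemma SmatInv_mul_Smat (s D : ℕ → ℂ)
    (hD : ∀ n, ∑ k ∈ Finset.range (n + 1), (-1 : ℂ) ^ k * D k * s (n - k) =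
      if n = 0 then 1 else 0) (n : ℕ) :
    SmatInv D n * Smat s n = 1 := by
  ext i k
  rw [Matrix.mul_apply]
  set h : ℕ → ℂ := fun m => if (k:ℕ) ≤ m ∧ m ≤ (i:ℕ) then
      ((-1:ℂ) ^ ((i:ℕ) - m) * D ((i:ℕ) - m)) * s (m - (k:ℕ)) else 0 with hh
  have h1 : ∀ m : Fin (n+1), SmatInv D n i m * Smat s n m k = h (m:ℕ) := by
    intro m
    simp only [SmatInv, Smat, hh]
    by_cases h1 : (m:ℕ) ≤ (i:ℕ) <;> by_cases h2 : (k:ℕ) ≤ (m:ℕ) <;>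
      simp [h1, h2]
  rw [Finset.sum_congr rfl (fun m _ => h1 m)]
  rw [Fin.sum_univ_eq_sum_range h (n+1)]
  by_cases hk : (k:ℕ) ≤ (i:ℕ)
  · rw [← Finset.sum_subset (Finset.range_subset_range.2 (show (i:ℕ)+1 ≤ n+1 by omega))
      (fun m _ hm => by
        simp only [hh]
        rw [if_neg]; intro hc; exact hm (Finset.mem_range.2 (by omega)))]
    rw [← Finset.sum_range_reflect h ((i:ℕ)+1)]
    have h2 : ∀ m ∈ Finset.range ((i:ℕ)+1), h ((i:ℕ)+1-1-m) =
        (fun m => if m ≤ (i:ℕ)-(k:ℕ) then (-1:ℂ)^m * D m * s (((i:ℕ)-(k:ℕ)) - m) else 0) m := by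
      intro m hm
      rw [Finset.mem_range] at hm
      simp only [hh]
      by_cases hc : m ≤ (i:ℕ)-(k:ℕ)
      · rw [if_pos (by omega), if_pos hc]
        have e1 : (i:ℕ) - ((i:ℕ)+1-1-m) = m := by omega
        have e2 : ((i:ℕ)+1-1-m) - (k:ℕ) = ((i:ℕ)-(k:ℕ)) - m := by omega
        rw [e1, e2]
      · rw [if_neg (by omega), if_neg hc]
    rw [Finset.sum_congr rfl h2]
    rw [← Finset.sum_subset (Finset.range_subset_range.2 (show (i:ℕ)-(k:ℕ)+1 ≤ (i:ℕ)+1 by omega))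
      (fun m _ hm => by
        rw [if_neg]; intro hc; exact hm (Finset.mem_range.2 (by omega)))]
    rw [Finset.sum_congr rfl (fun m hm => if_pos (by rw [Finset.mem_range] at hm; omega))]
    rw [hD ((i:ℕ)-(k:ℕ))]
    have hiff : i = k ↔ (i:ℕ)-(k:ℕ) = 0 := by
      rw [Fin.ext_iff]; omega
    by_cases hik : i = k
    · rw [if_pos (hiff.1 hik), Matrix.one_apply, if_pos hik]
    · rw [if_neg (fun hc => hik (hiff.2 hc)), Matrix.one_apply, if_neg hik]
  · have : ∀ m ∈ Finset.range (n+1), h m = 0 := by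
      intro m _
      simp only [hh]
      rw [if_neg]; omega
    rw [Finset.sum_congr rfl this, Finset.sum_const_zero]
    have hik : ¬ (i = k) := fun hc => hk (le_of_eq (congrArg Fin.val hc.symm))
    simp [Matrix.one_apply, hik]

lemma BmatInv_mul_Bmat (u v : ℂ) (hu : u ≠ 0) (n : ℕ) :
    BmatInv u v n * Bmat u v n = 1 := by
  ext i k
  rw [Matrix.mul_apply]
  set h1 : ℕ → ℂ := fun m => if m = (k:ℕ) then
      (if (k:ℕ) ≤ (i:ℕ) then (-v) ^ ((i:ℕ)-(k:ℕ)) / u ^ ((i:ℕ)-(k:ℕ)+1) else 0) * u else 0 with hh1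
  set h2 : ℕ → ℂ := fun m => if m = (k:ℕ)+1 then
      (if (k:ℕ)+1 ≤ (i:ℕ) then (-v) ^ ((i:ℕ)-(k:ℕ)-1) / u ^ ((i:ℕ)-(k:ℕ)) else 0) * v else 0 with hh2
  have hpt : ∀ m : Fin (n+1), BmatInv u v n i m * Bmat u v n m k = h1 (m:ℕ) + h2 (m:ℕ) := by
    intro m
    simp only [BmatInv, Bmat, hh1, hh2]
    by_cases e1 : (k:ℕ) = (m:ℕ)
    · rw [← e1]
      simp only [eq_self_iff_true, if_true]
      rw [if_neg (show ¬((k:ℕ) = (k:ℕ)+1) by omega), add_zero]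
    · rw [if_neg e1, if_neg (fun hc : (m:ℕ) = (k:ℕ) => e1 hc.symm)]
      by_cases e2 : (k:ℕ)+1 = (m:ℕ)
      · rw [if_pos e2, if_pos e2.symm, zero_add]
        by_cases e3 : (m:ℕ) ≤ (i:ℕ)
        · rw [if_pos e3, if_pos (by omega)]
          have h3 : (i:ℕ) - (m:ℕ) = (i:ℕ)-(k:ℕ)-1 := by omega
          have h4 : (i:ℕ)-(k:ℕ)-1 + 1 = (i:ℕ)-(k:ℕ) := by omega
          rw [h3, h4]
        · rw [if_neg e3, if_neg (by omega)]
      · rw [if_neg e2, if_neg (fun hc : (m:ℕ) = (k:ℕ)+1 => e2 hc.symm), mul_zero, add_zero]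
  rw [Finset.sum_congr rfl (fun m _ => hpt m), Fin.sum_univ_eq_sum_range (fun m => h1 m + h2 m) (n+1),
    Finset.sum_add_distrib]
  simp only [hh1, hh2]
  rw [Finset.sum_ite_eq' (Finset.range (n+1)) ((k:ℕ)), Finset.sum_ite_eq' (Finset.range (n+1)) ((k:ℕ)+1)]
  rw [if_pos (Finset.mem_range.2 k.isLt)]
  rcases lt_trichotomy ((k:ℕ)) ((i:ℕ)) with hlt | heq | hgt
  · rw [if_pos (Finset.mem_range.2 (by omega : (k:ℕ)+1 < n+1))]
    rw [if_pos (le_of_lt hlt), if_pos (by omega : (k:ℕ)+1 ≤ (i:ℕ))]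
    have hne : ¬ (i = k) := by rw [Fin.ext_iff]; omega
    rw [Matrix.one_apply, if_neg hne]
    have hd : (i:ℕ)-(k:ℕ) = ((i:ℕ)-(k:ℕ)-1) + 1 := by omega
    rw [show (i:ℕ)-(k:ℕ)+1 = ((i:ℕ)-(k:ℕ)) + 1 from rfl]
    rw [hd, pow_succ, pow_succ]
    field_simp
    rw [Nat.add_sub_cancel]; ring
  · have heqf : i = k := by rw [Fin.ext_iff]; omega
    rw [if_pos (le_of_eq heq), Matrix.one_apply, if_pos heqf]
    rw [← heq, Nat.sub_self, pow_zero, pow_one]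
    rw [if_neg (by omega : ¬ ((k:ℕ)+1 ≤ (k:ℕ)))]
    by_cases hkr : (k:ℕ)+1 ∈ Finset.range (n+1)
    · rw [if_pos hkr]; field_simp; simp
    · rw [if_neg hkr]; field_simp; simp
  · have hne : ¬ (i = k) := by rw [Fin.ext_iff]; omega
    rw [Matrix.one_apply, if_neg hne, if_neg (by omega : ¬ ((k:ℕ) ≤ (i:ℕ))), zero_mul, zero_add]
    by_cases hkr : (k:ℕ)+1 ∈ Finset.range (n+1)
    · rw [if_pos hkr, if_neg (by omega), zero_mul]
    · rw [if_neg hkr]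


lemma sum_Icc_bot (f : ℕ → ℂ) {k n : ℕ} (h : k ≤ n) :
    ∑ j ∈ Finset.Icc k n, f j = f k + ∑ j ∈ Finset.Icc (k+1) n, f j := by
  rw [Finset.Icc_eq_cons_Ioc h, Finset.sum_cons, ← Finset.Icc_add_one_left_eq_Ioc]

lemma Mentry (s t : ℕ → ℂ) (u v : ℂ) (n : ℕ) (i k : Fin (n+1)) :
    (Smat s n * (Matrix.diagonal (fun j : Fin (n+1) => t (j:ℕ)) * Bmat u v n)) i k =
      (if (k:ℕ) ≤ (i:ℕ) then s ((i:ℕ)-(k:ℕ)) * t (k:ℕ) * u else 0) +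
      (if (k:ℕ)+1 ≤ (i:ℕ) then s ((i:ℕ)-(k:ℕ)-1) * t ((k:ℕ)+1) * v else 0) := by
  rw [Matrix.mul_apply]
  set h1 : ℕ → ℂ := fun m => if m = (k:ℕ) then
      (if (k:ℕ) ≤ (i:ℕ) then s ((i:ℕ)-(k:ℕ)) * t (k:ℕ) * u else 0) else 0 with hh1
  set h2 : ℕ → ℂ := fun m => if m = (k:ℕ)+1 then
      (if (k:ℕ)+1 ≤ (i:ℕ) then s ((i:ℕ)-(k:ℕ)-1) * t ((k:ℕ)+1) * v else 0) else 0 with hh2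
  have hpt : ∀ m : Fin (n+1),
      Smat s n i m * (Matrix.diagonal (fun j : Fin (n+1) => t (j:ℕ)) * Bmat u v n) m k
        = h1 (m:ℕ) + h2 (m:ℕ) := by
    intro m
    rw [Matrix.diagonal_mul]
    simp only [Smat, Bmat, hh1, hh2]
    by_cases e1 : (k:ℕ) = (m:ℕ)
    · rw [← e1]
      simp only [eq_self_iff_true, if_true]
      rw [if_neg (show ¬((k:ℕ) = (k:ℕ)+1) by omega), add_zero]
      by_cases c : (k:ℕ) ≤ (i:ℕ)
      · rw [if_pos c, if_pos c]; ring
      · rw [if_neg c, if_neg c, zero_mul]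
    · rw [if_neg e1, if_neg (fun hc : (m:ℕ) = (k:ℕ) => e1 hc.symm), zero_add]
      by_cases e2 : (k:ℕ)+1 = (m:ℕ)
      · rw [if_pos e2, if_pos e2.symm]
        by_cases c : (k:ℕ)+1 ≤ (i:ℕ)
        · rw [if_pos c, if_pos (show (m:ℕ) ≤ (i:ℕ) by omega)]
          rw [show (i:ℕ) - (m:ℕ) = (i:ℕ)-(k:ℕ)-1 by omega, ← e2]
          ring
        · rw [if_neg c, if_neg (show ¬((m:ℕ) ≤ (i:ℕ)) by omega), zero_mul]
      · rw [if_neg e2, if_neg (fun hc : (m:ℕ) = (k:ℕ)+1 => e2 hc.symm), mul_zero]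
        by_cases c : (m:ℕ) ≤ (i:ℕ)
        · rw [if_pos c, mul_zero]
        · rw [if_neg c, zero_mul]
  rw [Finset.sum_congr rfl (fun m _ => hpt m),
    Fin.sum_univ_eq_sum_range (fun m => h1 m + h2 m) (n+1), Finset.sum_add_distrib]
  simp only [hh1, hh2]
  rw [Finset.sum_ite_eq' (Finset.range (n+1)) ((k:ℕ)),
    Finset.sum_ite_eq' (Finset.range (n+1)) ((k:ℕ)+1)]
  rw [if_pos (Finset.mem_range.2 k.isLt)]
  by_cases hk1 : (k:ℕ)+1 ∈ Finset.range (n+1)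
  · rw [if_pos hk1]
  · rw [if_neg hk1]
    rw [Finset.mem_range] at hk1
    rw [if_neg (show ¬((k:ℕ)+1 ≤ (i:ℕ)) by have := i.isLt; omega)]

lemma M_mulVec (r s t : ℕ → ℂ) (u v : ℂ) (hr : ∀ n, r n ≠ 0) (n : ℕ) (x : ℕ → ℂ)
    (i : Fin (n+1)) :
    (Smat s n * (Matrix.diagonal (fun j : Fin (n+1) => t (j:ℕ)) * Bmat u v n)).mulVec
      (fun j : Fin (n+1) => x (j:ℕ)) i = r (i:ℕ) * GmB r s t u v x (i:ℕ) := by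
  rw [Matrix.mulVec, dotProduct]
  set g : ℕ → ℂ := fun m => (if m ≤ (i:ℕ) then s ((i:ℕ)-m) * t m * u * x m else 0)
      + (if m+1 ≤ (i:ℕ) then s ((i:ℕ)-m-1) * t (m+1) * v * x m else 0) with hg
  have hpt : ∀ m : Fin (n+1),
      (Smat s n * (Matrix.diagonal (fun j : Fin (n+1) => t (j:ℕ)) * Bmat u v n)) i m * x (m:ℕ)
        = g (m:ℕ) := by
    intro m
    rw [Mentry, add_mul]
    simp only [hg]
    congr 1
    · by_cases c : (m:ℕ) ≤ (i:ℕ)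
      · rw [if_pos c, if_pos c]
      · simp [c]
    · by_cases c : (m:ℕ)+1 ≤ (i:ℕ)
      · rw [if_pos c, if_pos c]
      · simp [c]
  rw [Finset.sum_congr rfl (fun m _ => hpt m), Fin.sum_univ_eq_sum_range g (n+1)]
  rw [← Finset.sum_subset (Finset.range_subset_range.2 (show (i:ℕ)+1 ≤ n+1 by have := i.isLt; omega))
      (fun m hm hm' => by
        rw [Finset.mem_range] at hm'
        simp only [hg]
        rw [if_neg (by omega), if_neg (by omega), add_zero])]
  rw [Finset.sum_range_succ]
  have hgi : g (i:ℕ) = s 0 * t (i:ℕ) * u * x (i:ℕ) := by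
    simp only [hg]
    rw [if_pos le_rfl, if_neg (by omega), add_zero, Nat.sub_self]
  rw [hgi, GmB, ← mul_assoc, mul_inv_cancel₀ (hr _), one_mul]
  congr 1
  apply Finset.sum_congr rfl
  intro m hm
  have hmi := Finset.mem_range.1 hm
  simp only [hg]
  rw [if_pos (by omega), if_pos (by omega)]
  ring

lemma row_eq (s t r : ℕ → ℂ) (u v : ℂ) (D : ℕ → ℂ) (a : ℕ → ℂ)
    (ht : ∀ n, t n ≠ 0) (hs : s 0 ≠ 0) (hu : u ≠ 0) (hD0 : s 0 * D 0 = 1)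
    (n : ℕ) (k : Fin (n+1)) :
    r (k:ℕ) * Matrix.vecMul (fun l : Fin (n+1) => a (l:ℕ))
      (BmatInv u v n * (Matrix.diagonal (fun j : Fin (n+1) => (t (j:ℕ))⁻¹) * SmatInv D n)) k
      = Emat s t r u v D a n (k:ℕ) := by
  set c : ℕ → ℂ := fun j => (-1:ℂ)^(j-(k:ℕ)) * (D (j-(k:ℕ)) / t j) with hc
  set W : ℕ → ℕ → ℂ := fun j l => (-v)^(l-j)/u^(l-j+1) with hW
  set F : ℕ → ℕ → ℂ := fun l j => if (k:ℕ) ≤ j ∧ j ≤ l then c j * (W j l * a l) else 0 with hF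
  have step1 : Matrix.vecMul (fun l : Fin (n+1) => a (l:ℕ))
      (BmatInv u v n * (Matrix.diagonal (fun j : Fin (n+1) => (t (j:ℕ))⁻¹) * SmatInv D n)) k
      = ∑ j ∈ Finset.Icc (k:ℕ) n, c j * (∑ l ∈ Finset.Icc j n, W j l * a l) := by
    rw [Matrix.vecMul, dotProduct]
    have hpt : ∀ l : Fin (n+1), a (l:ℕ) *
        (BmatInv u v n * (Matrix.diagonal (fun j : Fin (n+1) => (t (j:ℕ))⁻¹) * SmatInv D n)) l k
        = ∑ j ∈ Finset.range (n+1), F (l:ℕ) j := by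
      intro l
      rw [Matrix.mul_apply, Finset.mul_sum]
      have hin : ∀ j : Fin (n+1), a (l:ℕ) * (BmatInv u v n l j *
          ((Matrix.diagonal (fun j : Fin (n+1) => (t (j:ℕ))⁻¹) * SmatInv D n) j k))
          = F (l:ℕ) (j:ℕ) := by
        intro j
        rw [Matrix.diagonal_mul]
        simp only [BmatInv, SmatInv, hF, hc, hW]
        by_cases c1 : (j:ℕ) ≤ (l:ℕ) <;> by_cases c2 : (k:ℕ) ≤ (j:ℕ) <;>
          simp [c1, c2] <;> ring
      rw [Finset.sum_congr rfl (fun j _ => hin j),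
        Fin.sum_univ_eq_sum_range (fun j => F (l:ℕ) j) (n+1)]
    rw [Finset.sum_congr rfl (fun l _ => hpt l),
      Fin.sum_univ_eq_sum_range (fun l => ∑ j ∈ Finset.range (n+1), F l j) (n+1),
      Finset.sum_comm]
    have hsub1 : Finset.Icc (k:ℕ) n ⊆ Finset.range (n+1) := by
      intro j hj; rw [Finset.mem_Icc] at hj; rw [Finset.mem_range]; omega
    rw [← Finset.sum_subset hsub1 (fun j hj hj' => by
      rw [Finset.mem_range] at hj; rw [Finset.mem_Icc] at hj'
      apply Finset.sum_eq_zero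
      intro l _
      simp only [hF]
      rw [if_neg (by omega)])]
    apply Finset.sum_congr rfl
    intro j hj
    rw [Finset.mem_Icc] at hj
    have hsub2 : Finset.Icc j n ⊆ Finset.range (n+1) := by
      intro l hl; rw [Finset.mem_Icc] at hl; rw [Finset.mem_range]; omega
    rw [← Finset.sum_subset hsub2 (fun l hl hl' => by
      rw [Finset.mem_range] at hl; rw [Finset.mem_Icc] at hl'
      simp only [hF]
      rw [if_neg (by omega)])]
    rw [Finset.mul_sum]
    apply Finset.sum_congr rfl
    intro l hl
    rw [Finset.mem_Icc] at hl
    simp only [hF]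
    rw [if_pos ⟨hj.1, hl.1⟩]
  rw [step1, Emat, if_pos (show (k:ℕ) ≤ n by have := k.isLt; omega)]
  have hkn : (k:ℕ) ≤ n := by have := k.isLt; omega
  have hD0' : D 0 = (s 0)⁻¹ := by
    field_simp at hD0 ⊢
    linear_combination hD0
  have hck : c (k:ℕ) * (W (k:ℕ) (k:ℕ) * a (k:ℕ)) = a (k:ℕ) / (u * s 0 * t (k:ℕ)) := by
    simp only [hc, hW, Nat.sub_self, pow_zero, pow_one, hD0']
    field_simp
    ring
  have econv1 : (∑ j ∈ Finset.Icc ((k:ℕ)+2) n, (-1:ℂ)^(j-(k:ℕ)) * (D (j-(k:ℕ)) / t j) *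
      (∑ l ∈ Finset.Icc j n, ((-v)^(l-j)/u^(l-j+1)) * a l))
      = ∑ j ∈ Finset.Icc ((k:ℕ)+2) n, c j * (∑ l ∈ Finset.Icc j n, W j l * a l) := rfl
  have econv2 : (∑ j ∈ Finset.Icc (k:ℕ) ((k:ℕ)+1), (-1:ℂ)^(j-(k:ℕ)) * (D (j-(k:ℕ)) / t j) *
      (∑ l ∈ Finset.Icc ((k:ℕ)+1) n, ((-v)^(l-j)/u^(l-j+1)) * a l))
      = ∑ j ∈ Finset.Icc (k:ℕ) ((k:ℕ)+1), c j * (∑ l ∈ Finset.Icc ((k:ℕ)+1) n, W j l * a l) := rfl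
  rw [econv1, econv2]
  rw [sum_Icc_bot (fun j => c j * (∑ l ∈ Finset.Icc ((k:ℕ)+1) n, W j l * a l))
    (by omega : (k:ℕ) ≤ (k:ℕ)+1), Finset.Icc_self, Finset.sum_singleton]
  rw [sum_Icc_bot (fun j => c j * (∑ l ∈ Finset.Icc j n, W j l * a l)) hkn]
  rw [sum_Icc_bot (fun l => W (k:ℕ) l * a l) hkn]
  rw [← hck]
  by_cases hk1 : (k:ℕ)+1 ≤ n
  · rw [sum_Icc_bot (fun j => c j * (∑ l ∈ Finset.Icc j n, W j l * a l)) hk1]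
    ring
  · rw [Finset.Icc_eq_empty hk1, Finset.Icc_eq_empty (show ¬ (k:ℕ)+2 ≤ n by omega)]
    simp only [Finset.sum_empty, mul_zero, add_zero, zero_add]

lemma key_ident (r s t : ℕ → ℂ) (u v : ℂ) (D : ℕ → ℂ) (a : ℕ → ℂ)
    (hr : ∀ n, r n ≠ 0) (ht : ∀ n, t n ≠ 0) (hs : s 0 ≠ 0) (hu : u ≠ 0)
    (hD : ∀ n, ∑ k ∈ Finset.range (n + 1), (-1 : ℂ) ^ k * D k * s (n - k) =
      if n = 0 then 1 else 0)
    (x : ℕ → ℂ) (n : ℕ) :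
    ∑ k ∈ Finset.range (n+1), a k * x k
      = ∑ k ∈ Finset.range (n+1), Emat s t r u v D a n k * GmB r s t u v x k := by
  have hD0 : s 0 * D 0 = 1 := by
    have h0 := hD 0
    simp at h0
    linear_combination h0
  set M := Smat s n * (Matrix.diagonal (fun j : Fin (n+1) => t (j:ℕ)) * Bmat u v n) with hM
  set Minv := BmatInv u v n * (Matrix.diagonal (fun j : Fin (n+1) => (t (j:ℕ))⁻¹) * SmatInv D n)
    with hMinv
  have hTT : Matrix.diagonal (fun j : Fin (n+1) => (t (j:ℕ))⁻¹)
      * Matrix.diagonal (fun j : Fin (n+1) => t (j:ℕ)) = 1 := by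
    rw [Matrix.diagonal_mul_diagonal]
    rw [show (fun j : Fin (n+1) => (t (j:ℕ))⁻¹ * t (j:ℕ)) = fun _ => 1 from
      funext fun j => inv_mul_cancel₀ (ht _)]
    exact Matrix.diagonal_one
  have hMM : Minv * M = 1 := by
    have h1 := SmatInv_mul_Smat s D hD n
    have h2 := BmatInv_mul_Bmat u v hu n
    calc Minv * M = BmatInv u v n * (Matrix.diagonal (fun j : Fin (n+1) => (t (j:ℕ))⁻¹)
        * (SmatInv D n * (Smat s n * (Matrix.diagonal (fun j : Fin (n+1) => t (j:ℕ))
          * Bmat u v n)))) := by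
          simp only [hM, hMinv, Matrix.mul_assoc]
      _ = BmatInv u v n * (Matrix.diagonal (fun j : Fin (n+1) => (t (j:ℕ))⁻¹)
        * ((Matrix.diagonal (fun j : Fin (n+1) => t (j:ℕ)) * Bmat u v n))) := by
          rw [← Matrix.mul_assoc (SmatInv D n) (Smat s n), h1, Matrix.one_mul]
      _ = (BmatInv u v n * Bmat u v n) := by
          rw [← Matrix.mul_assoc (Matrix.diagonal (fun j : Fin (n+1) => (t (j:ℕ))⁻¹)), hTT,
            Matrix.one_mul]
      _ = 1 := h2
  have hX : (fun j : Fin (n+1) => x (j:ℕ))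
      = Minv.mulVec (M.mulVec (fun j : Fin (n+1) => x (j:ℕ))) := by
    rw [Matrix.mulVec_mulVec, hMM, Matrix.one_mulVec]
  rw [← Fin.sum_univ_eq_sum_range (fun k => a k * x k) (n+1),
    ← Fin.sum_univ_eq_sum_range (fun k => Emat s t r u v D a n k * GmB r s t u v x k) (n+1)]
  calc ∑ i : Fin (n+1), a (i:ℕ) * x (i:ℕ)
      = dotProduct (fun i : Fin (n+1) => a (i:ℕ)) (fun j : Fin (n+1) => x (j:ℕ)) := rfl
    _ = dotProduct (fun i : Fin (n+1) => a (i:ℕ))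
        (Minv.mulVec (M.mulVec (fun j : Fin (n+1) => x (j:ℕ)))) := by rw [← hX]
    _ = dotProduct (Matrix.vecMul (fun i : Fin (n+1) => a (i:ℕ)) Minv)
        (M.mulVec (fun j : Fin (n+1) => x (j:ℕ))) := Matrix.dotProduct_mulVec _ _ _
    _ = ∑ i : Fin (n+1), Matrix.vecMul (fun l : Fin (n+1) => a (l:ℕ)) Minv i
        * (M.mulVec (fun j : Fin (n+1) => x (j:ℕ)) i) := rfl
    _ = ∑ i : Fin (n+1), Emat s t r u v D a n (i:ℕ) * GmB r s t u v x (i:ℕ) := by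
        apply Finset.sum_congr rfl
        intro i _
        rw [hM, M_mulVec r s t u v hr n x i, ← row_eq s t r u v D a ht hs hu hD0 n i]
        ring

lemma suff_dir (r s t : ℕ → ℂ) (u v : ℂ) (D : ℕ → ℂ) (p : ℕ → ℝ) (H : ℝ)
    (hp : ∀ k, 1 < p k) (hpH : ∀ k, p k ≤ H)
    (hr : ∀ n, r n ≠ 0) (ht : ∀ n, t n ≠ 0) (hs : s 0 ≠ 0) (hu : u ≠ 0)
    (hD : ∀ n, ∑ k ∈ Finset.range (n + 1), (-1 : ℂ) ^ k * D k * s (n - k) =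
      if n = 0 then 1 else 0)
    (a : ℕ → ℂ) (L : ℕ) (hL : 1 ≤ L) (C : ℝ)
    (hC : ∀ n : ℕ, ∑ k ∈ Finset.range (n + 1),
        ‖Emat s t r u v D a n k * ((L : ℂ))⁻¹‖ ^ (p k / (p k - 1)) ≤ C)
    (x : ℕ → ℂ) (hx : Summable fun n => ‖GmB r s t u v x n‖ ^ p n) :
    BddAbove (Set.range fun n => ‖∑ k ∈ Finset.range (n + 1), a k * x k‖) := by
  set q : ℕ → ℝ := fun k => p k / (p k - 1) with hq
  set y : ℕ → ℂ := fun n => GmB r s t u v x n with hy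
  set T : ℝ := ∑' n, ‖y n‖ ^ p n with hT
  have hLR : (1:ℝ) ≤ (L:ℝ) := by exact_mod_cast hL
  have hLC : ((L:ℂ)) ≠ 0 := by
    simp only [ne_eq, Nat.cast_eq_zero]; omega
  have hTn : ∀ n, ∑ k ∈ Finset.range (n+1), ‖y k‖ ^ p k ≤ T := by
    intro n
    exact Summable.sum_le_tsum _ (fun i _ => Real.rpow_nonneg (norm_nonneg _) _) hx
  refine ⟨C + (L:ℝ)^H * T, ?_⟩
  rintro z ⟨n, rfl⟩
  have hconj : ∀ k, (q k).HolderConjugate (p k) :=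
    fun k => (Real.HolderConjugate.conjExponent (hp k)).symm
  calc ‖∑ k ∈ Finset.range (n+1), a k * x k‖
      = ‖∑ k ∈ Finset.range (n+1), Emat s t r u v D a n k * y k‖ := by
        rw [key_ident r s t u v D a hr ht hs hu hD x n]
    _ ≤ ∑ k ∈ Finset.range (n+1), ‖Emat s t r u v D a n k * y k‖ := norm_sum_le _ _
    _ ≤ ∑ k ∈ Finset.range (n+1),
        (‖Emat s t r u v D a n k * ((L:ℂ))⁻¹‖ ^ q k + (L:ℝ)^H * ‖y k‖ ^ p k) := by
        apply Finset.sum_le_sum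
        intro k _
        have hsplit : Emat s t r u v D a n k * y k
            = (Emat s t r u v D a n k * ((L:ℂ))⁻¹) * ((L:ℂ) * y k) := by
          field_simp
        rw [hsplit, norm_mul]
        set A := ‖Emat s t r u v D a n k * ((L:ℂ))⁻¹‖
        set B := ‖(L:ℂ) * y k‖
        have hyoung := Real.young_inequality A B (hconj k)
        rw [abs_of_nonneg (norm_nonneg _), abs_of_nonneg (norm_nonneg _)] at hyoung
        have h1 : A ^ q k / q k ≤ A ^ q k :=
          div_le_self (Real.rpow_nonneg (norm_nonneg _) _) (le_of_lt (hconj k).lt)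
        have h2 : B ^ p k / p k ≤ B ^ p k :=
          div_le_self (Real.rpow_nonneg (norm_nonneg _) _) (le_of_lt (hp k))
        have h3 : B ^ p k ≤ (L:ℝ)^H * ‖y k‖ ^ p k := by
          have : B = (L:ℝ) * ‖y k‖ := by
            simp only [B, norm_mul, Complex.norm_natCast]
          rw [this, Real.mul_rpow (by positivity) (norm_nonneg _)]
          apply mul_le_mul_of_nonneg_right _ (Real.rpow_nonneg (norm_nonneg _) _)
          exact Real.rpow_le_rpow_of_exponent_le hLR (hpH k)
        linarith
    _ = (∑ k ∈ Finset.range (n+1), ‖Emat s t r u v D a n k * ((L:ℂ))⁻¹‖ ^ q k)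
        + ∑ k ∈ Finset.range (n+1), (L:ℝ)^H * ‖y k‖ ^ p k := Finset.sum_add_distrib
    _ ≤ C + (L:ℝ)^H * T := by
        apply add_le_add (hC n)
        rw [← Finset.mul_sum]
        exact mul_le_mul_of_nonneg_left (hTn n) (Real.rpow_nonneg (by positivity) _)

lemma bound_of_fin_supp (r s t : ℕ → ℂ) (u v : ℂ) (D : ℕ → ℂ) (p : ℕ → ℝ)
    (hp : ∀ k, 1 < p k)
    (hr : ∀ n, r n ≠ 0) (ht : ∀ n, t n ≠ 0) (hs : s 0 ≠ 0) (hu : u ≠ 0)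
    (hD : ∀ n, ∑ k ∈ Finset.range (n + 1), (-1 : ℂ) ^ k * D k * s (n - k) =
      if n = 0 then 1 else 0)
    (a : ℕ → ℂ)
    (hLHS : ∀ x : ℕ → ℂ, (Summable fun n => ‖GmB r s t u v x n‖ ^ p n) →
      BddAbove (Set.range fun n => ‖∑ k ∈ Finset.range (n + 1), a k * x k‖))
    (w : ℕ → ℂ) (K : ℕ) (hw : ∀ k, K < k → w k = 0) :
    ∃ M : ℝ, 0 ≤ M ∧ ∀ n, ‖∑ k ∈ Finset.range (n+1), Emat s t r u v D a n k * w k‖ ≤ M := by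
  set x := solveX r s t u v w with hx
  have hxw : ∀ n, GmB r s t u v x n = w n := solveX_spec r s t u v hr ht hs hu w
  have hsum : Summable (fun n => ‖GmB r s t u v x n‖ ^ p n) := by
    apply summable_of_ne_finset_zero (s := Finset.range (K+1))
    intro n hn
    rw [Finset.mem_range] at hn
    rw [hxw n, hw n (by omega), norm_zero, Real.zero_rpow (by have := hp n; linarith)]
  obtain ⟨b, hb⟩ := hLHS x hsum
  refine ⟨max b 0, le_max_right _ _, fun n => ?_⟩
  have h1 : ∑ k ∈ Finset.range (n+1), Emat s t r u v D a n k * w k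
      = ∑ k ∈ Finset.range (n+1), a k * x k := by
    rw [key_ident r s t u v D a hr ht hs hu hD x n]
    exact Finset.sum_congr rfl fun k _ => by rw [hxw k]
  rw [h1]
  exact le_max_of_le_left (hb (Set.mem_range_self n))

lemma col_bound (r s t : ℕ → ℂ) (u v : ℂ) (D : ℕ → ℂ) (p : ℕ → ℝ)
    (hp : ∀ k, 1 < p k)
    (hr : ∀ n, r n ≠ 0) (ht : ∀ n, t n ≠ 0) (hs : s 0 ≠ 0) (hu : u ≠ 0)
    (hD : ∀ n, ∑ k ∈ Finset.range (n + 1), (-1 : ℂ) ^ k * D k * s (n - k) =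
      if n = 0 then 1 else 0)
    (a : ℕ → ℂ)
    (hLHS : ∀ x : ℕ → ℂ, (Summable fun n => ‖GmB r s t u v x n‖ ^ p n) →
      BddAbove (Set.range fun n => ‖∑ k ∈ Finset.range (n + 1), a k * x k‖))
    (j : ℕ) :
    ∃ M : ℝ, 0 ≤ M ∧ ∀ n, ‖Emat s t r u v D a n j‖ ≤ M := by
  obtain ⟨M, hM0, hM⟩ := bound_of_fin_supp r s t u v D p hp hr ht hs hu hD a hLHS
    (fun k => if k = j then 1 else 0) j (fun k hk => by show (if k = j then (1:ℂ) else 0) = 0; rw [if_neg (by omega)])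
  refine ⟨M, hM0, fun n => ?_⟩
  by_cases hjn : j ≤ n
  · have h := hM n
    rw [show ∑ k ∈ Finset.range (n+1), Emat s t r u v D a n k * (if k = j then 1 else 0)
        = ∑ k ∈ Finset.range (n+1), (if k = j then Emat s t r u v D a n k else 0) from
      Finset.sum_congr rfl fun k _ => by by_cases hkj : k = j <;> simp [hkj]] at h
    rwa [Finset.sum_ite_eq' (Finset.range (n+1)) j, if_pos (Finset.mem_range.2 (by omega))] at h
  · rw [Emat, if_neg (by omega), norm_zero]
    exact hM0

lemma step_lemma (r s t : ℕ → ℂ) (u v : ℂ) (D : ℕ → ℂ) (p : ℕ → ℝ)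
    (hp : ∀ k, 1 < p k)
    (hr : ∀ n, r n ≠ 0) (ht : ∀ n, t n ≠ 0) (hs : s 0 ≠ 0) (hu : u ≠ 0)
    (hD : ∀ n, ∑ k ∈ Finset.range (n + 1), (-1 : ℂ) ^ k * D k * s (n - k) =
      if n = 0 then 1 else 0)
    (a : ℕ → ℂ)
    (hLHS : ∀ x : ℕ → ℂ, (Summable fun n => ‖GmB r s t u v x n‖ ^ p n) →
      BddAbove (Set.range fun n => ‖∑ k ∈ Finset.range (n + 1), a k * x k‖))
    (hfail : ∀ L : ℕ, 1 ≤ L → ∀ C : ℝ, ∃ n, C < ∑ k ∈ Finset.range (n + 1),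
        ‖Emat s t r u v D a n k * ((L : ℂ))⁻¹‖ ^ (p k / (p k - 1)))
    (m K : ℕ) (w : ℕ → ℂ) (hw : ∀ k, K < k → w k = 0) :
    ∃ K' : ℕ, ∃ w' : ℕ → ℂ, K < K' ∧ (∀ k, k ≤ K → w' k = w k) ∧ (∀ k, K' < k → w' k = 0) ∧
      ((∑ k ∈ Finset.Ioc K K', ‖w' k‖ ^ p k) ≤ ((2:ℝ)⁻¹) ^ m) ∧
      ((m : ℝ) ≤ ‖∑ k ∈ Finset.range (K'+1), Emat s t r u v D a K' k * w' k‖) := by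
  set q : ℕ → ℝ := fun k => p k / (p k - 1) with hqdef
  set e : ℕ → ℕ → ℂ := fun n k => Emat s t r u v D a n k with he
  have hq1 : ∀ k, 1 < q k := by
    intro k
    have hpk := hp k
    simp only [hqdef]
    rw [lt_div_iff₀ (by linarith)]
    linarith
  have hq0 : ∀ k, 0 < q k := fun k => lt_trans one_pos (hq1 k)
  -- bound for the current w
  obtain ⟨M, hM0, hM⟩ := bound_of_fin_supp r s t u v D p hp hr ht hs hu hD a hLHS w K hw
  -- column bounds
  have hcol : ∀ j : ℕ, ∃ Mc : ℝ, 0 ≤ Mc ∧ ∀ n, ‖e n j‖ ≤ Mc :=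
    fun j => col_bound r s t u v D p hp hr ht hs hu hD a hLHS j
  choose Mc hMc0 hMc using hcol
  set T : ℝ := (m:ℝ) + M + 1 with hTdef
  have hT1 : 1 ≤ T := by
    have : (0:ℝ) ≤ (m:ℝ) := Nat.cast_nonneg m
    rw [hTdef]; linarith
  set Hd : ℝ := ∑ j ∈ Finset.range (K+1), (max (Mc j) 1) ^ q j with hHddef
  set L : ℕ := ⌈T * 2^m⌉₊ + 1 with hLdef
  have hL1 : 1 ≤ L := by omega
  have hL1R : (1:ℝ) ≤ (L:ℝ) := by exact_mod_cast hL1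
  have hLpos : (0:ℝ) < (L:ℝ) := by linarith
  have hLT : T * 2^m ≤ (L:ℝ) := by
    calc T * 2^m ≤ (⌈T * 2^m⌉₊ : ℝ) := Nat.le_ceil _
    _ ≤ (L:ℝ) := by rw [hLdef]; push_cast; linarith
  obtain ⟨n, hn0⟩ := hfail L hL1 (Hd + T)
  have hn : Hd + T < ∑ k ∈ Finset.range (n + 1), ‖e n k * ((L:ℂ))⁻¹‖ ^ q k := hn0
  -- split the row sum into head and tail
  have hsplit := Finset.sum_filter_add_sum_filter_not (Finset.range (n+1)) (fun k => k ≤ K)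
    (fun k => ‖e n k * ((L:ℂ))⁻¹‖ ^ q k)
  have hLinv : ‖((L:ℂ))⁻¹‖ ≤ 1 := by
    rw [norm_inv, Complex.norm_natCast]
    rw [inv_le_one_iff₀]
    right; exact hL1R
  have hhead : ∑ k ∈ Finset.filter (fun k => k ≤ K) (Finset.range (n+1)),
      ‖e n k * ((L:ℂ))⁻¹‖ ^ q k ≤ Hd := by
    rw [hHddef]
    apply le_trans (Finset.sum_le_sum (g := fun k => (max (Mc k) 1) ^ q k) ?_)
    · apply Finset.sum_le_sum_of_subset_of_nonneg
      · intro k hk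
        rw [Finset.mem_filter] at hk
        rw [Finset.mem_range]; omega
      · intro k _ _
        apply Real.rpow_nonneg
        positivity
    · intro k _
      apply Real.rpow_le_rpow (norm_nonneg _) _ (le_of_lt (hq0 k))
      calc ‖e n k * ((L:ℂ))⁻¹‖ = ‖e n k‖ * ‖((L:ℂ))⁻¹‖ := norm_mul _ _
        _ ≤ ‖e n k‖ * 1 := mul_le_mul_of_nonneg_left hLinv (norm_nonneg _)
        _ = ‖e n k‖ := mul_one _
        _ ≤ Mc k := hMc k n
        _ ≤ max (Mc k) 1 := le_max_left _ _
  have hfilterIoc : Finset.filter (fun k => ¬ k ≤ K) (Finset.range (n+1)) = Finset.Ioc K n := by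
    ext k
    simp only [Finset.mem_filter, Finset.mem_range, Finset.mem_Ioc]
    omega
  set S : ℝ := ∑ k ∈ Finset.Ioc K n, ‖e n k * ((L:ℂ))⁻¹‖ ^ q k with hSdef
  have hTS : T < S := by
    have : Hd + T < (∑ k ∈ Finset.filter (fun k => k ≤ K) (Finset.range (n+1)),
        ‖e n k * ((L:ℂ))⁻¹‖ ^ q k) + S := by
      rw [hSdef, ← hfilterIoc, hsplit]
      exact hn
    linarith
  have hS0 : 0 < S := by linarith
  have hKn : K < n := by
    by_contra hc
    have : Finset.Ioc K n = ∅ := Finset.Ioc_eq_empty (by omega)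
    rw [hSdef, this, Finset.sum_empty] at hS0
    exact lt_irrefl 0 hS0
  set ε : ℝ := T / S with hεdef
  have hε0 : 0 < ε := div_pos (by linarith) hS0
  have hε1 : ε ≤ 1 := by
    rw [hεdef, div_le_one hS0]; linarith
  set w' : ℕ → ℂ := fun k => if k ≤ K then w k else if k ≤ n then
      (ε:ℂ) * (starRingEnd ℂ) (e n k) * (((‖e n k‖ ^ (q k - 2) / (L:ℝ) ^ (q k)) : ℝ) : ℂ)
    else 0 with hw'def
  have hp1 : ∀ k, p k - 1 ≠ 0 := fun k => by have := hp k; linarith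
  have hEL : ∀ k, ‖e n k * ((L:ℂ))⁻¹‖ ^ q k = ‖e n k‖ ^ q k / (L:ℝ) ^ q k := by
    intro k
    rw [norm_mul, norm_inv, Complex.norm_natCast,
      Real.mul_rpow (norm_nonneg _) (inv_nonneg.2 (le_of_lt hLpos)),
      Real.inv_rpow (le_of_lt hLpos), ← div_eq_mul_inv]
  have hw'k : ∀ k, K < k → k ≤ n → w' k = (ε:ℂ) * (starRingEnd ℂ) (e n k)
      * (((‖e n k‖ ^ (q k - 2) / (L:ℝ) ^ (q k)) : ℝ) : ℂ) := by
    intro k h1 h2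
    simp only [hw'def]
    rw [if_neg (by omega), if_pos h2]
  refine ⟨n, w', hKn, fun k hk => by simp only [hw'def]; rw [if_pos hk], ?_, ?_, ?_⟩
  · intro k hk
    simp only [hw'def]
    rw [if_neg (by omega), if_neg (by omega)]
  · -- mass bound
    have hterm : ∀ k ∈ Finset.Ioc K n, ‖w' k‖ ^ p k ≤ ε * ‖e n k * ((L:ℂ))⁻¹‖ ^ q k * (L:ℝ)⁻¹ := by
      intro k hk
      rw [Finset.mem_Ioc] at hk
      by_cases hek : e n k = 0
      · rw [hw'k k hk.1 hk.2, hek]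
        simp only [map_zero, mul_zero, zero_mul, norm_zero]
        rw [Real.zero_rpow (by have := hp k; linarith), Real.zero_rpow (ne_of_gt (hq0 k))]
        simp
      · have hekpos : 0 < ‖e n k‖ := norm_pos_iff.2 hek
        have hc0 : (0:ℝ) ≤ ‖e n k‖ ^ (q k - 2) / (L:ℝ) ^ (q k) :=
          div_nonneg (Real.rpow_nonneg (norm_nonneg _) _) (Real.rpow_nonneg (le_of_lt hLpos) _)
        have hnorm : ‖w' k‖ = ε * (‖e n k‖ ^ (q k - 1) / (L:ℝ) ^ q k) := by
          rw [hw'k k hk.1 hk.2, norm_mul, norm_mul, Complex.norm_real, Complex.norm_real,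
            RCLike.norm_conj, Real.norm_eq_abs, Real.norm_eq_abs]
          rw [abs_of_nonneg (le_of_lt hε0), abs_of_nonneg hc0, mul_assoc]
          congr 1
          rw [← mul_div_assoc]
          congr 1
          nth_rewrite 1 [← Real.rpow_one (‖e n k‖)]
          rw [← Real.rpow_add hekpos, show (1:ℝ) + (q k - 2) = q k - 1 by ring]
        have h0 := hp1 k
        have hqp1 : (q k - 1) * p k = q k := by
          simp only [hqdef]
          field_simp
          all_goals ring
        have hqp2 : q k * p k = q k + p k := by
          simp only [hqdef]
          field_simp
          all_goals ring
        have h1 : ε ^ p k ≤ ε := by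
          nth_rewrite 2 [← Real.rpow_one ε]
          exact Real.rpow_le_rpow_of_exponent_ge hε0 hε1 (le_of_lt (hp k))
        have h2 : ((L:ℝ) ^ p k)⁻¹ ≤ (L:ℝ)⁻¹ := by
          apply inv_anti₀ hLpos
          nth_rewrite 1 [← Real.rpow_one (L:ℝ)]
          exact Real.rpow_le_rpow_of_exponent_le hL1R (le_of_lt (hp k))
        rw [hnorm, hEL k]
        have hA0 : (0:ℝ) ≤ ‖e n k‖ ^ (q k - 1) := Real.rpow_nonneg (norm_nonneg _) _
        have hB0 : (0:ℝ) ≤ (L:ℝ) ^ q k := Real.rpow_nonneg (le_of_lt hLpos) _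
        have hX0 : (0:ℝ) ≤ ‖e n k‖ ^ q k / (L:ℝ) ^ q k :=
          div_nonneg (Real.rpow_nonneg (norm_nonneg _) _) hB0
        calc (ε * (‖e n k‖ ^ (q k - 1) / (L:ℝ) ^ q k)) ^ p k
            = ε ^ p k * ((‖e n k‖ ^ (q k - 1)) ^ p k / ((L:ℝ) ^ q k) ^ p k) := by
              rw [Real.mul_rpow (le_of_lt hε0) (div_nonneg hA0 hB0),
                Real.div_rpow hA0 hB0]
          _ = ε ^ p k * (‖e n k‖ ^ q k / ((L:ℝ) ^ q k * (L:ℝ) ^ p k)) := by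
              rw [← Real.rpow_mul (le_of_lt hekpos), ← Real.rpow_mul (le_of_lt hLpos),
                hqp1, hqp2, Real.rpow_add hLpos]
          _ = ε ^ p k * (‖e n k‖ ^ q k / (L:ℝ) ^ q k) * (((L:ℝ) ^ p k)⁻¹) := by
              rw [div_mul_eq_div_div, div_eq_mul_inv (_ / _), ← mul_assoc]
          _ ≤ ε * (‖e n k‖ ^ q k / (L:ℝ) ^ q k) * ((L:ℝ))⁻¹ := by
              apply mul_le_mul (mul_le_mul_of_nonneg_right h1 hX0) h2
                (inv_nonneg.2 (Real.rpow_nonneg (le_of_lt hLpos) _))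
                (mul_nonneg (le_of_lt hε0) hX0)
    calc ∑ k ∈ Finset.Ioc K n, ‖w' k‖ ^ p k
        ≤ ∑ k ∈ Finset.Ioc K n, ε * ‖e n k * ((L:ℂ))⁻¹‖ ^ q k * (L:ℝ)⁻¹ :=
          Finset.sum_le_sum hterm
      _ = ε * S * (L:ℝ)⁻¹ := by rw [← Finset.sum_mul, ← Finset.mul_sum, hSdef]
      _ = T * (L:ℝ)⁻¹ := by rw [hεdef, div_mul_cancel₀ _ (ne_of_gt hS0)]
      _ = T / (L:ℝ) := (div_eq_mul_inv _ _).symm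
      _ ≤ T / (T * 2^m) := div_le_div_of_nonneg_left (by linarith)
          (mul_pos (by linarith) (pow_pos two_pos m)) hLT
      _ = (2:ℝ)⁻¹ ^ m := by
          rw [div_mul_eq_div_div, div_self (by linarith : T ≠ 0), one_div, ← inv_pow]
  · -- the hump lower bound
    set head : ℂ := ∑ k ∈ Finset.range (K+1), e n k * w k with hheaddef
    have hkey : ∀ k ∈ Finset.Ioc K n,
        e n k * w' k = (((ε * ‖e n k * ((L:ℂ))⁻¹‖ ^ q k) : ℝ) : ℂ) := by
      intro k hk
      rw [Finset.mem_Ioc] at hk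
      by_cases hek : e n k = 0
      · rw [hek, zero_mul, zero_mul, norm_zero, Real.zero_rpow (ne_of_gt (hq0 k)), mul_zero,
          Complex.ofReal_zero]
      · have hekpos : 0 < ‖e n k‖ := norm_pos_iff.2 hek
        have hconj : e n k * (starRingEnd ℂ) (e n k) = ((‖e n k‖ ^ (2:ℕ) : ℝ) : ℂ) := by
          rw [Complex.mul_conj, Complex.normSq_eq_norm_sq]
        have h2q : (‖e n k‖:ℝ) ^ (2:ℕ) * ‖e n k‖ ^ (q k - 2) = ‖e n k‖ ^ q k := by
          rw [← Real.rpow_natCast ‖e n k‖ 2, ← Real.rpow_add hekpos]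
          norm_num
        calc e n k * w' k
            = ((ε:ℝ):ℂ) * (e n k * (starRingEnd ℂ) (e n k))
              * ((((‖e n k‖ ^ (q k - 2) / (L:ℝ) ^ (q k)):ℝ)):ℂ) := by
              rw [hw'k k hk.1 hk.2]; ring
          _ = ((ε * (‖e n k‖ ^ (2:ℕ) * (‖e n k‖ ^ (q k - 2) / (L:ℝ) ^ (q k))) : ℝ) : ℂ) := by
              rw [hconj]; push_cast; ring
          _ = (((ε * ‖e n k * ((L:ℂ))⁻¹‖ ^ q k) : ℝ) : ℂ) := by
              rw [hEL k]
              congr 2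
              rw [← mul_div_assoc, h2q]
    have hsum2 : ∑ k ∈ Finset.range (n+1), e n k * w' k = head + ((T:ℝ):ℂ) := by
      rw [Finset.range_eq_Ico,
        ← Finset.sum_Ico_consecutive _ (Nat.zero_le (K+1)) (by omega : K+1 ≤ n+1)]
      congr 1
      · rw [← Finset.range_eq_Ico, hheaddef]
        apply Finset.sum_congr rfl
        intro k hk
        rw [Finset.mem_range] at hk
        congr 1
        simp only [hw'def]
        rw [if_pos (by omega : k ≤ K)]
      · have hIco : Finset.Ico (K+1) (n+1) = Finset.Ioc K n := by
          ext x; simp only [Finset.mem_Ico, Finset.mem_Ioc]; omega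
        rw [hIco, Finset.sum_congr rfl hkey, ← Complex.ofReal_sum, ← Finset.mul_sum]
        congr 1
        rw [← hSdef, hεdef]
        exact div_mul_cancel₀ _ (ne_of_gt hS0)
    have hheadle : ‖head‖ ≤ M := by
      have h := hM n
      have heq2 : ∑ k ∈ Finset.range (n+1), Emat s t r u v D a n k * w k = head := by
        rw [hheaddef]
        symm
        apply Finset.sum_subset (Finset.range_subset_range.2 (by omega : K+1 ≤ n+1))
        intro k _ hk
        rw [Finset.mem_range] at hk
        rw [hw k (by omega), mul_zero]
      rwa [heq2] at h
    rw [hsum2]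
    have hTnorm : ‖((T:ℝ):ℂ)‖ = T := by
      rw [Complex.norm_real, Real.norm_eq_abs, abs_of_nonneg (by linarith)]
    have htri : ‖((T:ℝ):ℂ)‖ - ‖head‖ ≤ ‖head + ((T:ℝ):ℂ)‖ := by
      have h := norm_sub_le (head + ((T:ℝ):ℂ)) head
      have he2 : head + ((T:ℝ):ℂ) - head = ((T:ℝ):ℂ) := by ring
      rw [he2] at h
      linarith
    have hmT : (m:ℝ) ≤ T - M := by rw [hTdef]; linarith
    rw [hTnorm] at htri
    linarith

lemma nec_dir (r s t : ℕ → ℂ) (u v : ℂ) (D : ℕ → ℂ) (p : ℕ → ℝ)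
    (hp : ∀ k, 1 < p k)
    (hr : ∀ n, r n ≠ 0) (ht : ∀ n, t n ≠ 0) (hs : s 0 ≠ 0) (hu : u ≠ 0)
    (hD : ∀ n, ∑ k ∈ Finset.range (n + 1), (-1 : ℂ) ^ k * D k * s (n - k) =
      if n = 0 then 1 else 0)
    (a : ℕ → ℂ)
    (hLHS : ∀ x : ℕ → ℂ, (Summable fun n => ‖GmB r s t u v x n‖ ^ p n) →
      BddAbove (Set.range fun n => ‖∑ k ∈ Finset.range (n + 1), a k * x k‖)) :
    ∃ L : ℕ, 1 ≤ L ∧ ∃ C : ℝ, ∀ n : ℕ,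
      ∑ k ∈ Finset.range (n + 1),
        ‖Emat s t r u v D a n k * ((L : ℂ))⁻¹‖ ^ (p k / (p k - 1)) ≤ C := by
  by_contra hnot
  push_neg at hnot
  have hfail : ∀ L : ℕ, 1 ≤ L → ∀ C : ℝ, ∃ n, C < ∑ k ∈ Finset.range (n + 1),
      ‖Emat s t r u v D a n k * ((L : ℂ))⁻¹‖ ^ (p k / (p k - 1)) := hnot
  have hstep : ∀ (m : ℕ) (st : {st : ℕ × (ℕ → ℂ) // ∀ k, st.1 < k → st.2 k = 0}),
      ∃ st' : {st : ℕ × (ℕ → ℂ) // ∀ k, st.1 < k → st.2 k = 0},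
        st.1.1 < st'.1.1 ∧ (∀ k, k ≤ st.1.1 → st'.1.2 k = st.1.2 k) ∧
        ((∑ k ∈ Finset.Ioc st.1.1 st'.1.1, ‖st'.1.2 k‖ ^ p k) ≤ ((2:ℝ)⁻¹)^m) ∧
        ((m:ℝ) ≤ ‖∑ k ∈ Finset.range (st'.1.1+1),
          Emat s t r u v D a st'.1.1 k * st'.1.2 k‖) := by
    intro m st
    obtain ⟨K', w', h1, h2, h3, h4, h5⟩ :=
      step_lemma r s t u v D p hp hr ht hs hu hD a hLHS hfail m st.1.1 st.1.2 st.2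
    exact ⟨⟨(K', w'), h3⟩, h1, h2, h4, h5⟩
  choose f hf1 hf2 hf3 hf4 using hstep
  let chain : ℕ → {st : ℕ × (ℕ → ℂ) // ∀ k, st.1 < k → st.2 k = 0} :=
    fun m => Nat.rec ⟨(0, fun _ => 0), fun _ _ => rfl⟩ (fun m st => f (m+1) st) m
  set Kf : ℕ → ℕ := fun m => (chain m).1.1 with hKf
  set Wf : ℕ → ℕ → ℂ := fun m => (chain m).1.2 with hWf
  have hKlt : ∀ m, Kf m < Kf (m+1) := fun m => hf1 (m+1) (chain m)
  have hKmono : Monotone Kf := monotone_nat_of_le_succ (fun m => (hKlt m).le)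
  have hKm : ∀ m, m ≤ Kf m := by
    intro m
    induction m with
    | zero => exact Nat.zero_le _
    | succ m ih => have := hKlt m; omega
  have hagree : ∀ m m', m ≤ m' → ∀ k, k ≤ Kf m → Wf m' k = Wf m k := by
    intro m m' hmm'
    induction m', hmm' using Nat.le_induction with
    | base => intro k _; rfl
    | succ m' hmm' ih =>
      intro k hk
      have h2 := hf2 (m'+1) (chain m') k (le_trans hk (hKmono hmm'))
      exact h2.trans (ih k hk)
  set y : ℕ → ℂ := fun k => Wf (k+1) k with hy
  have hyW : ∀ m k, k ≤ Kf m → y k = Wf m k := by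
    intro m k hk
    rcases le_total m (k+1) with h | h
    · exact hagree m (k+1) h k hk
    · have hkk : k ≤ Kf (k+1) := le_trans (Nat.le_succ k) (hKm (k+1))
      exact (hagree (k+1) m h k hkk).symm
  have hmass : ∀ m, ∑ k ∈ Finset.range (Kf m + 1), ‖Wf m k‖ ^ p k ≤ 2 - 2 * ((2:ℝ)⁻¹)^m := by
    intro m
    induction m with
    | zero =>
      have hz : ∀ k ∈ Finset.range (Kf 0 + 1), ‖Wf 0 k‖ ^ p k = 0 := by
        intro k _
        show ‖(0:ℂ)‖ ^ p k = 0
        rw [norm_zero, Real.zero_rpow (by have := hp k; linarith)]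
      rw [Finset.sum_eq_zero hz]
      norm_num
    | succ m ih =>
      have hIoc : Finset.Ico (Kf m + 1) (Kf (m+1) + 1) = Finset.Ioc (Kf m) (Kf (m+1)) := by
        ext x; simp only [Finset.mem_Ico, Finset.mem_Ioc]; omega
      have hsplit : ∑ k ∈ Finset.range (Kf (m+1) + 1), ‖Wf (m+1) k‖ ^ p k
          = ∑ k ∈ Finset.range (Kf m + 1), ‖Wf (m+1) k‖ ^ p k
            + ∑ k ∈ Finset.Ioc (Kf m) (Kf (m+1)), ‖Wf (m+1) k‖ ^ p k := by
        rw [Finset.range_eq_Ico, ← Finset.sum_Ico_consecutive _ (Nat.zero_le _)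
          (by have := hKlt m; omega : Kf m + 1 ≤ Kf (m+1) + 1), ← Finset.range_eq_Ico, hIoc]
      have hstep2 : ∀ j, j ≤ Kf m → Wf (m+1) j = Wf m j :=
        fun j hj => hf2 (m+1) (chain m) j hj
      have h1 : ∑ k ∈ Finset.range (Kf m + 1), ‖Wf (m+1) k‖ ^ p k
          = ∑ k ∈ Finset.range (Kf m + 1), ‖Wf m k‖ ^ p k := by
        apply Finset.sum_congr rfl
        intro k hk
        rw [Finset.mem_range] at hk
        rw [hstep2 k (by omega)]
      have h2 : ∑ k ∈ Finset.Ioc (Kf m) (Kf (m+1)), ‖Wf (m+1) k‖ ^ p k ≤ ((2:ℝ)⁻¹)^(m+1) :=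
        hf3 (m+1) (chain m)
      have hA : (0:ℝ) ≤ ((2:ℝ)⁻¹)^m := by positivity
      have hps : ((2:ℝ)⁻¹)^(m+1) = ((2:ℝ)⁻¹)^m * 2⁻¹ := pow_succ _ _
      rw [hsplit, h1]
      linarith
  have hynn : ∀ k, 0 ≤ ‖y k‖ ^ p k := fun k => Real.rpow_nonneg (norm_nonneg _) _
  have hsummable : Summable (fun k => ‖y k‖ ^ p k) := by
    apply summable_of_sum_range_le hynn (c := 2)
    intro N
    calc ∑ k ∈ Finset.range N, ‖y k‖ ^ p k
        = ∑ k ∈ Finset.range N, ‖Wf N k‖ ^ p k := by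
          apply Finset.sum_congr rfl
          intro k hk
          rw [Finset.mem_range] at hk
          rw [hyW N k (by have := hKm N; omega)]
      _ ≤ ∑ k ∈ Finset.range (Kf N + 1), ‖Wf N k‖ ^ p k := by
          apply Finset.sum_le_sum_of_subset_of_nonneg
          · intro x hx
            rw [Finset.mem_range] at hx ⊢
            have := hKm N; omega
          · exact fun k _ _ => Real.rpow_nonneg (norm_nonneg _) _
      _ ≤ 2 - 2 * ((2:ℝ)⁻¹)^N := hmass N
      _ ≤ 2 := by
          have : (0:ℝ) ≤ ((2:ℝ)⁻¹)^N := by positivity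
          linarith
  set x := solveX r s t u v y with hx
  have hxy : ∀ n, GmB r s t u v x n = y n := solveX_spec r s t u v hr ht hs hu y
  have hsum2 : Summable (fun n => ‖GmB r s t u v x n‖ ^ p n) := by
    have heqf : (fun n => ‖GmB r s t u v x n‖ ^ p n) = fun n => ‖y n‖ ^ p n :=
      funext fun n => by rw [hxy n]
    rw [heqf]
    exact hsummable
  obtain ⟨b, hb⟩ := hLHS x hsum2
  set m0 : ℕ := ⌈b⌉₊ + 1 with hm0
  have hble : b < (m0:ℝ) := by
    have := Nat.le_ceil b
    rw [hm0]
    push_cast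
    linarith
  have hlow : ((m0:ℕ):ℝ) ≤ ‖∑ k ∈ Finset.range (Kf m0 + 1),
      Emat s t r u v D a (Kf m0) k * Wf m0 k‖ := hf4 (⌈b⌉₊+1) (chain ⌈b⌉₊)
  have hup : ‖∑ k ∈ Finset.range (Kf m0 + 1), a k * x k‖ ≤ b :=
    hb (Set.mem_range_self (Kf m0))
  have heq3 : ∑ k ∈ Finset.range (Kf m0 + 1), a k * x k
      = ∑ k ∈ Finset.range (Kf m0 + 1), Emat s t r u v D a (Kf m0) k * Wf m0 k := by
    rw [key_ident r s t u v D a hr ht hs hu hD x (Kf m0)]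
    apply Finset.sum_congr rfl
    intro k hk
    rw [Finset.mem_range] at hk
    rw [hxy k, hyW m0 k (by omega)]
  rw [heq3] at hup
  linarith

/-- γ-dual of `l(r,s,t,p;B)` for `1 < p_k ≤ H < ∞`: `a` is in the γ-dual iff there is
`L ∈ ℕ` with `sup_n Σ_k |e_{nk} L^{-1}|^{p_k'} < ∞`. -/
theorem stmt11 (r s t : ℕ → ℂ) (u v : ℂ) (D : ℕ → ℂ) (p : ℕ → ℝ) (H : ℝ)
    (hp : ∀ k, 1 < p k) (hpH : ∀ k, p k ≤ H)
    (hr : ∀ n, r n ≠ 0) (ht : ∀ n, t n ≠ 0) (hs : s 0 ≠ 0) (hu : u ≠ 0) (hv : v ≠ 0)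
    (hD : ∀ n, ∑ k ∈ Finset.range (n + 1), (-1 : ℂ) ^ k * D k * s (n - k) =
      if n = 0 then 1 else 0)
    (a : ℕ → ℂ) :
    ((∀ x : ℕ → ℂ, (Summable fun n => ‖GmB r s t u v x n‖ ^ p n) →
      BddAbove (Set.range fun n => ‖∑ k ∈ Finset.range (n + 1), a k * x k‖))
    ↔
    (∃ L : ℕ, 1 ≤ L ∧ ∃ C : ℝ, ∀ n : ℕ,
      ∑ k ∈ Finset.range (n + 1),
        ‖Emat s t r u v D a n k * ((L : ℂ))⁻¹‖ ^ (p k / (p k - 1)) ≤ C)) := by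
  constructor
  · intro hLHS
    exact nec_dir r s t u v D p hp hr ht hs hu hD a hLHS
  · rintro ⟨L, hL, C, hC⟩ x hx
    exact suff_dir r s t u v D p H hp hpH hr ht hs hu hD a L hL C hC x hx
end
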